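/- arXiv:1210.5685 — 11 statements merged into one kernel-verified Lean document; each statement's English description precedes it below -/
import Mathlib

section
/- The integral of ξ over the interval [0, π/2] equals −π/2, i.e. ∫₀^{π/2} ξ(θ) dθ = −π/2 (the integrand is bounded on (0, π/2), so the integral is well defined). -/
open Real Set Filter Topology

/-- The test function ξ(θ) = (cos²θ + 2θ·sinθ·cosθ + θ² − π²/4)/cos²θ. -/
noncomputable def xi (θ : ℝ) : ℝ :=
  (Real.cos θ ^ 2 + 2 * θ * Real.sin θ * Real.cos θ + θ ^ 2 - Real.pi ^ 2 / 4) /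
    Real.cos θ ^ 2

noncomputable def xiAuxG (θ : ℝ) : ℝ :=
  if θ = Real.pi / 2 then -1 else (θ - Real.pi / 2) / Real.cos θ

noncomputable def xiAuxF (θ : ℝ) : ℝ :=
  θ + (θ + Real.pi / 2) * Real.sin θ * xiAuxG θ

lemma cos_pos_of_mem_Ico {θ : ℝ} (hθ : θ ∈ Ico 0 (Real.pi / 2)) : 0 < Real.cos θ :=
  Real.cos_pos_of_mem_Ioo ⟨lt_of_lt_of_le (by linarith [Real.pi_pos]) hθ.1, hθ.2⟩

lemma tendsto_slope_cos :
    Tendsto (fun θ => (θ - Real.pi / 2) / Real.cos θ) (𝓝[≠] (Real.pi / 2)) (𝓝 (-1)) := by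
  have h := (Real.hasDerivAt_cos (Real.pi / 2))
  rw [hasDerivAt_iff_tendsto_slope] at h
  have h' : Tendsto (fun θ => (slope Real.cos (Real.pi / 2) θ)⁻¹)
      (𝓝[≠] (Real.pi / 2)) (𝓝 ((-Real.sin (Real.pi / 2))⁻¹)) :=
    h.inv₀ (by simp [Real.sin_pi_div_two])
  simp only [Real.sin_pi_div_two] at h'
  have e : ((-1 : ℝ))⁻¹ = -1 := by norm_num
  rw [e] at h'
  refine h'.congr fun θ => ?_
  rw [slope_def_field, Real.cos_pi_div_two, sub_zero, inv_div]

lemma tendsto_u_div_sin : Tendsto (fun u : ℝ => u / Real.sin u) (𝓝[≠] 0) (𝓝 1) := by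
  have h := (Real.hasDerivAt_sin 0)
  rw [hasDerivAt_iff_tendsto_slope] at h
  have h' : Tendsto (fun u => (slope Real.sin 0 u)⁻¹) (𝓝[≠] (0:ℝ))
      (𝓝 ((Real.cos 0)⁻¹)) := h.inv₀ (by simp)
  simp only [Real.cos_zero, inv_one] at h'
  refine h'.congr fun u => ?_
  rw [slope_def_field, Real.sin_zero, sub_zero, sub_zero, inv_div]

lemma tendsto_phi :
    Tendsto (fun u : ℝ => 1 + (Real.pi - 2 * u) *
      ((Real.sin (2 * u) - 2 * u) / (2 * Real.sin u ^ 2)) - u ^ 2 / Real.sin u ^ 2)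
      (𝓝[>] (0:ℝ)) (𝓝 0) := by
  have hle : (𝓝[>] (0:ℝ)) ≤ 𝓝[≠] 0 :=
    nhdsWithin_mono _ fun x hx => ne_of_gt hx
  have h1 : Tendsto (fun u : ℝ => u ^ 2 / Real.sin u ^ 2) (𝓝[>] (0:ℝ)) (𝓝 1) := by
    have := ((tendsto_u_div_sin.mono_left hle).pow 2)
    simpa [div_pow] using this
  have h2 : Tendsto (fun u : ℝ => (Real.sin (2 * u) - 2 * u) / u ^ 2) (𝓝[>] (0:ℝ)) (𝓝 0) := by
    apply squeeze_zero_norm' (a := fun u : ℝ => 2 * u)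
    · filter_upwards [Ioo_mem_nhdsGT_of_mem
        (⟨le_refl (0:ℝ), by norm_num⟩ : (0:ℝ) ∈ Ico (0:ℝ) (1/2))] with u hu
      have hu0 : 0 < u := hu.1
      have h2u : 0 < 2 * u := by linarith
      have h2u1 : 2 * u ≤ 1 := by linarith [hu.2]
      have hlt : Real.sin (2 * u) < 2 * u := Real.sin_lt h2u
      have hgt : 2 * u - (2 * u) ^ 3 / 4 < Real.sin (2 * u) := by
        have := Real.sin_gt_sub_cube h2u; nlinarith [pow_pos h2u 3]
      have habs : |Real.sin (2 * u) - 2 * u| ≤ 2 * u ^ 3 := by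
        rw [abs_sub_comm, abs_of_pos (by linarith)]
        nlinarith
      rw [Real.norm_eq_abs, abs_div, abs_of_pos (by positivity : (0:ℝ) < u ^ 2),
        div_le_iff₀ (by positivity)]
      calc |Real.sin (2 * u) - 2 * u| ≤ 2 * u ^ 3 := habs
        _ = 2 * u * u ^ 2 := by ring
    · have : Tendsto (fun u : ℝ => 2 * u) (𝓝 (0:ℝ)) (𝓝 (2 * 0)) :=
        (continuous_const.mul continuous_id).tendsto 0
      simpa using this.mono_left nhdsWithin_le_nhds
  have h3 : Tendsto (fun u : ℝ => (Real.sin (2 * u) - 2 * u) / (2 * Real.sin u ^ 2))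
      (𝓝[>] (0:ℝ)) (𝓝 0) := by
    have h := (h2.mul h1).div_const 2
    norm_num at h
    refine h.congr' ?_
    filter_upwards [Ioo_mem_nhdsGT_of_mem
        (⟨le_refl (0:ℝ), Real.pi_pos⟩ : (0:ℝ) ∈ Ico (0:ℝ) Real.pi)] with u hu
    have hsin : Real.sin u ≠ 0 :=
      ne_of_gt (Real.sin_pos_of_pos_of_lt_pi hu.1 hu.2)
    have hu0 : u ≠ 0 := ne_of_gt hu.1
    field_simp
  have h4 : Tendsto (fun u : ℝ => Real.pi - 2 * u) (𝓝[>] (0:ℝ)) (𝓝 Real.pi) := by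
    have : Tendsto (fun u : ℝ => Real.pi - 2 * u) (𝓝 (0:ℝ)) (𝓝 (Real.pi - 2 * 0)) :=
      (continuous_const.sub (continuous_const.mul continuous_id)).tendsto 0
    simpa using this.mono_left nhdsWithin_le_nhds
  have htot := (tendsto_const_nhds (x := (1:ℝ)) (f := 𝓝[>] (0:ℝ))).add (h4.mul h3) |>.sub h1
  convert htot using 2
  norm_num

lemma xi_eq_phi {θ : ℝ} (hθ : θ ∈ Ico 0 (Real.pi / 2)) :
    xi θ = 1 + (Real.pi - 2 * (Real.pi / 2 - θ)) *
      ((Real.sin (2 * (Real.pi / 2 - θ)) - 2 * (Real.pi / 2 - θ)) /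
        (2 * Real.sin (Real.pi / 2 - θ) ^ 2)) -
      (Real.pi / 2 - θ) ^ 2 / Real.sin (Real.pi / 2 - θ) ^ 2 := by
  have hcos : Real.cos θ ≠ 0 := ne_of_gt (cos_pos_of_mem_Ico hθ)
  have hs : Real.sin (Real.pi / 2 - θ) = Real.cos θ := Real.sin_pi_div_two_sub θ
  have h2 : Real.sin (2 * (Real.pi / 2 - θ)) = 2 * Real.sin θ * Real.cos θ := by
    have : 2 * (Real.pi / 2 - θ) = Real.pi - 2 * θ := by ring
    rw [this, Real.sin_pi_sub, Real.sin_two_mul]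
  rw [xi, hs, h2]
  field_simp
  ring

lemma xi_cwa_top :
    ContinuousWithinAt xi (Icc 0 (Real.pi / 2)) (Real.pi / 2) := by
  rw [← continuousWithinAt_diff_self]
  have hset : Icc (0:ℝ) (Real.pi / 2) \ {Real.pi / 2} = Ico 0 (Real.pi / 2) := by
    rw [Icc_sdiff_right]
  rw [ContinuousWithinAt, hset]
  have hxi0 : xi (Real.pi / 2) = 0 := by
    simp [xi, Real.cos_pi_div_two]
  rw [hxi0]
  have hcomp : Tendsto (fun θ : ℝ => Real.pi / 2 - θ)
      (𝓝[Ico 0 (Real.pi / 2)] (Real.pi / 2)) (𝓝[>] 0) := by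
    apply tendsto_nhdsWithin_of_tendsto_nhds_of_eventually_within
    · have : Tendsto (fun θ : ℝ => Real.pi / 2 - θ) (𝓝 (Real.pi / 2))
          (𝓝 (Real.pi / 2 - Real.pi / 2)) :=
        (continuous_const.sub continuous_id).tendsto _
      simpa using this.mono_left nhdsWithin_le_nhds
    · filter_upwards [self_mem_nhdsWithin] with θ hθ
      exact sub_pos.mpr hθ.2
  have := tendsto_phi.comp hcomp
  refine this.congr' ?_
  filter_upwards [self_mem_nhdsWithin] with θ hθ
  exact (xi_eq_phi hθ).symm

lemma xi_continuousOn : ContinuousOn xi (Icc 0 (Real.pi / 2)) := by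
  intro x hx
  rcases eq_or_ne x (Real.pi / 2) with rfl | hne
  · exact xi_cwa_top
  · have hx' : x ∈ Ico 0 (Real.pi / 2) := ⟨hx.1, lt_of_le_of_ne hx.2 hne⟩
    have hcos : Real.cos x ≠ 0 := ne_of_gt (cos_pos_of_mem_Ico hx')
    have : ContinuousAt xi x := by
      apply ContinuousAt.div
      · fun_prop
      · fun_prop
      · positivity
    exact this.continuousWithinAt

lemma xiAuxG_cwa_top :
    ContinuousWithinAt xiAuxG (Icc 0 (Real.pi / 2)) (Real.pi / 2) := by
  rw [← continuousWithinAt_diff_self]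
  rw [ContinuousWithinAt, Icc_sdiff_right]
  have h0 : xiAuxG (Real.pi / 2) = -1 := by simp [xiAuxG]
  rw [h0]
  have hle : 𝓝[Ico (0:ℝ) (Real.pi / 2)] (Real.pi / 2) ≤ 𝓝[≠] (Real.pi / 2) :=
    nhdsWithin_mono _ fun x hx => ne_of_lt hx.2
  refine (tendsto_slope_cos.mono_left hle).congr' ?_
  filter_upwards [self_mem_nhdsWithin] with θ hθ
  simp [xiAuxG, ne_of_lt hθ.2]

lemma xiAuxF_continuousOn : ContinuousOn xiAuxF (Icc 0 (Real.pi / 2)) := by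
  have hG : ContinuousOn xiAuxG (Icc 0 (Real.pi / 2)) := by
    intro x hx
    rcases eq_or_ne x (Real.pi / 2) with rfl | hne
    · exact xiAuxG_cwa_top
    · have hx' : x ∈ Ico 0 (Real.pi / 2) := ⟨hx.1, lt_of_le_of_ne hx.2 hne⟩
      have hcos : Real.cos x ≠ 0 := ne_of_gt (cos_pos_of_mem_Ico hx')
      have hev : xiAuxG =ᶠ[𝓝 x] fun θ => (θ - Real.pi / 2) / Real.cos θ := by
        filter_upwards [isOpen_ne.mem_nhds hne] with θ hθ
        simp [xiAuxG, hθ]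
      have hca : ContinuousAt (fun θ : ℝ => (θ - Real.pi / 2) / Real.cos θ) x := by
        apply ContinuousAt.div
        · fun_prop
        · fun_prop
        · exact hcos
      exact (hca.congr hev.symm).continuousWithinAt
  apply ContinuousOn.add continuousOn_id
  exact ((continuousOn_id.add continuousOn_const).mul
    (Real.continuous_sin.continuousOn)).mul hG

lemma xiAuxF_deriv {x : ℝ} (hx : x ∈ Ioo 0 (Real.pi / 2)) :
    HasDerivAt xiAuxF (xi x) x := by
  have hcos : Real.cos x ≠ 0 := ne_of_gt (cos_pos_of_mem_Ico ⟨le_of_lt hx.1, hx.2⟩)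
  have hF : HasDerivAt (fun θ : ℝ => θ + (θ ^ 2 - Real.pi ^ 2 / 4) * Real.tan θ)
      (1 + ((2 * x) * Real.tan x + (x ^ 2 - Real.pi ^ 2 / 4) * (1 / Real.cos x ^ 2))) x := by
    have h1 : HasDerivAt (fun θ : ℝ => θ ^ 2 - Real.pi ^ 2 / 4) (2 * x) x := by
      simpa using ((hasDerivAt_pow 2 x).sub_const (Real.pi ^ 2 / 4))
    exact (hasDerivAt_id x).add (h1.mul (Real.hasDerivAt_tan hcos))
  have heq : 1 + ((2 * x) * Real.tan x + (x ^ 2 - Real.pi ^ 2 / 4) * (1 / Real.cos x ^ 2))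
      = xi x := by
    rw [xi, Real.tan_eq_sin_div_cos]
    field_simp
    ring
  rw [heq] at hF
  refine hF.congr_of_eventuallyEq ?_
  filter_upwards [isOpen_Ioo.mem_nhds hx] with θ hθ
  have hθne : θ ≠ Real.pi / 2 := ne_of_lt hθ.2
  rw [xiAuxF, xiAuxG, if_neg hθne, Real.tan_eq_sin_div_cos]
  ring

theorem xi_integral_half :
    ∫ θ in (0 : ℝ)..(Real.pi / 2), xi θ = -(Real.pi / 2) := by
  have hab : (0:ℝ) ≤ Real.pi / 2 := by positivity
  have hint : IntervalIntegrable xi MeasureTheory.volume 0 (Real.pi / 2) := by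
    apply ContinuousOn.intervalIntegrable
    rw [uIcc_of_le hab]
    exact xi_continuousOn
  have := intervalIntegral.integral_eq_sub_of_hasDeriv_right_of_le hab
    xiAuxF_continuousOn (fun x hx => (xiAuxF_deriv hx).hasDerivWithinAt) hint
  rw [this]
  have hF0 : xiAuxF 0 = 0 := by simp [xiAuxF]
  have hFtop : xiAuxF (Real.pi / 2) = -(Real.pi / 2) := by
    simp [xiAuxF, xiAuxG, Real.sin_pi_div_two]
    ring
  rw [hF0, hFtop, sub_zero]
end

section
/- The integral of ξ over the interval [−π/2, π/2] equals −π, i.e. ∫_{−π/2}^{π/2} ξ(θ) dθ = −π. -/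
open Real Set Filter Topology

lemma xi_keyA : ∀ θ ∈ Icc (0:ℝ) (π/2), π/2 - (cos θ + θ * sin θ) ≤ cos θ ^ 2 := by
  intro θ hθ
  have hanti : AntitoneOn (fun x : ℝ => cos x ^ 2 + (cos x + x * sin x)) (Icc 0 (π/2)) := by
    apply antitoneOn_of_deriv_nonpos (convex_Icc _ _)
    · fun_prop
    · intro x hx
      have hd : HasDerivAt (fun x : ℝ => cos x ^ 2 + (cos x + x * sin x))
          (2 * cos x * (-sin x) + (-sin x + (sin x + x * cos x))) x := by
        have h1 : HasDerivAt (fun x : ℝ => cos x ^ 2) (2 * cos x ^ 1 * (-sin x)) x :=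
          (Real.hasDerivAt_cos x).pow 2
        have h2 : HasDerivAt (fun x : ℝ => x * sin x) (1 * sin x + x * cos x) x :=
          (hasDerivAt_id x).mul (Real.hasDerivAt_sin x)
        exact (h1.add ((Real.hasDerivAt_cos x).add h2)).congr_deriv (by ring)
      exact hd.differentiableAt.differentiableWithinAt
    · intro x hx
      rw [interior_Icc] at hx
      have hd : HasDerivAt (fun x : ℝ => cos x ^ 2 + (cos x + x * sin x))
          (2 * cos x * (-sin x) + (-sin x + (sin x + x * cos x))) x := by
        have h1 : HasDerivAt (fun x : ℝ => cos x ^ 2) (2 * cos x ^ 1 * (-sin x)) x :=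
          (Real.hasDerivAt_cos x).pow 2
        have h2 : HasDerivAt (fun x : ℝ => x * sin x) (1 * sin x + x * cos x) x :=
          (hasDerivAt_id x).mul (Real.hasDerivAt_sin x)
        exact (h1.add ((Real.hasDerivAt_cos x).add h2)).congr_deriv (by ring)
      rw [hd.deriv]
      have hpi : (0:ℝ) < π := pi_pos
      have hcos : 0 ≤ cos x := cos_nonneg_of_mem_Icc ⟨by linarith [hx.1], le_of_lt hx.2⟩
      have hsin : 2 / π * x ≤ sin x := Real.mul_le_sin (le_of_lt hx.1) (le_of_lt hx.2)
      have hsin' : 2 * x ≤ π * sin x := by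
        rw [div_mul_eq_mul_div, div_le_iff₀ hpi] at hsin; linarith
      have hs0 : 0 ≤ sin x := sin_nonneg_of_nonneg_of_le_pi (le_of_lt hx.1) (by linarith [hx.2])
      have hxle : x ≤ 2 * sin x := by nlinarith [pi_le_four]
      nlinarith
  have := hanti hθ (right_mem_Icc.2 (by positivity)) hθ.2
  simp only at this
  simp [cos_pi_div_two, sin_pi_div_two] at this
  linarith

lemma xi_keyB : ∀ θ ∈ Icc (0:ℝ) (π/2), cos θ + θ * sin θ ≤ π/2 := by
  intro θ hθ
  have hmono : MonotoneOn (fun x : ℝ => cos x + x * sin x) (Icc 0 (π/2)) := by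
    apply monotoneOn_of_deriv_nonneg (convex_Icc _ _)
    · fun_prop
    · intro x hx
      have hd : HasDerivAt (fun x : ℝ => cos x + x * sin x)
          (-sin x + (1 * sin x + x * cos x)) x :=
        (Real.hasDerivAt_cos x).add ((hasDerivAt_id x).mul (Real.hasDerivAt_sin x))
      exact hd.differentiableAt.differentiableWithinAt
    · intro x hx
      rw [interior_Icc] at hx
      have hd : HasDerivAt (fun x : ℝ => cos x + x * sin x)
          (-sin x + (1 * sin x + x * cos x)) x :=
        (Real.hasDerivAt_cos x).add ((hasDerivAt_id x).mul (Real.hasDerivAt_sin x))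
      rw [hd.deriv]
      have hcos : 0 ≤ cos x := cos_nonneg_of_mem_Icc ⟨by linarith [hx.1, pi_pos], le_of_lt hx.2⟩
      nlinarith [hx.1]
  have := hmono hθ (right_mem_Icc.2 (by positivity)) hθ.2
  simpa using this

lemma xi_key : ∀ θ ∈ Icc (-(π/2)) (π/2),
    π/2 - (cos θ + θ * sin θ) ≤ cos θ ^ 2 ∧ cos θ + θ * sin θ ≤ π/2 := by
  intro θ hθ
  rcases le_or_gt 0 θ with h | h
  · exact ⟨xi_keyA θ ⟨h, hθ.2⟩, xi_keyB θ ⟨h, hθ.2⟩⟩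
  · have h1 := xi_keyA (-θ) ⟨by linarith, by linarith [hθ.1]⟩
    have h2 := xi_keyB (-θ) ⟨by linarith, by linarith [hθ.1]⟩
    simp only [Real.cos_neg, Real.sin_neg, mul_neg, neg_mul, neg_neg] at h1 h2
    exact ⟨h1, h2⟩

lemma xi_bound : ∀ θ ∈ Ioo (-(π/2)) (π/2), |xi θ| ≤ π := by
  intro θ hθ
  have hpi : (0:ℝ) < π := pi_pos
  have hcos : 0 < cos θ := Real.cos_pos_of_mem_Ioo hθ
  have hkey := xi_key θ ⟨le_of_lt hθ.1, le_of_lt hθ.2⟩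
  set P := cos θ + θ * sin θ with hP
  have hP0 : 0 ≤ P := by
    have : 0 ≤ θ * sin θ := by
      rcases le_or_gt 0 θ with h | h
      · exact mul_nonneg h (sin_nonneg_of_nonneg_of_le_pi h (by linarith [hθ.2]))
      · have hs : sin θ ≤ 0 :=
          sin_nonpos_of_nonpos_of_neg_pi_le (le_of_lt h) (by linarith [hθ.1])
        nlinarith [mul_nonneg (neg_nonneg.2 (le_of_lt h)) (neg_nonneg.2 hs)]
    linarith
  have hxi : xi θ = θ^2 - ((π/2 - P) * (P + π/2)) / cos θ ^ 2 := by
    unfold xi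
    rw [hP]
    field_simp
    linear_combination (-16 * θ^2) * (Real.sin_sq_add_cos_sq θ)
  have hq : (π/2 - P) / cos θ ^ 2 ≤ 1 := by
    rw [div_le_one (by positivity)]
    exact hkey.1
  have hq0 : 0 ≤ (π/2 - P) / cos θ ^ 2 := by
    apply div_nonneg (by linarith [hkey.2]) (by positivity)
  have hfrac : ((π/2 - P) * (P + π/2)) / cos θ ^ 2
      = ((π/2 - P) / cos θ ^ 2) * (P + π/2) := by ring
  have hθ2 : θ^2 ≤ π^2/4 := by
    have h1 : -(π/2) ≤ θ := le_of_lt hθ.1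
    have h2 : θ ≤ π/2 := le_of_lt hθ.2
    nlinarith
  rw [hxi, hfrac, abs_le]
  constructor
  · nlinarith [hq, hq0, hP0, hkey.2, pi_le_four]
  · nlinarith [hq, hq0, hP0, hkey.2, pi_le_four]

lemma xi_integrable : IntervalIntegrable xi MeasureTheory.volume (-(π/2)) (π/2) := by
  have hpi : (0:ℝ) < π := pi_pos
  rw [intervalIntegrable_iff_integrableOn_Ioc_of_le (by linarith)]
  have hmeas : MeasureTheory.AEStronglyMeasurable xi MeasureTheory.volume := by
    apply Measurable.aestronglyMeasurable
    unfold xi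
    fun_prop
  apply MeasureTheory.Measure.integrableOn_of_bounded (measure_Ioc_lt_top.ne) hmeas (M := π)
  rw [MeasureTheory.ae_restrict_iff' measurableSet_Ioc]
  refine MeasureTheory.ae_of_all _ (fun x hx => ?_)
  rcases lt_or_eq_of_le hx.2 with h | h
  · exact xi_bound x ⟨hx.1, h⟩
  · rw [h]
    have : xi (π/2) = 0 := by
      unfold xi
      rw [Real.cos_pi_div_two]
      norm_num
    rw [this]
    simp [pi_pos.le]

theorem xi_integral_full :
    ∫ θ in (-(Real.pi / 2))..(Real.pi / 2), xi θ = -Real.pi := by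
  have hpi : (0:ℝ) < π := pi_pos
  have hab : -(π/2) < π/2 := by linarith
  set F : ℝ → ℝ := fun θ => θ + (θ^2 - π^2/4) * tan θ with hF
  have hderiv : ∀ x ∈ Ioo (-(π/2)) (π/2), HasDerivAt F (xi x) x := by
    intro x hx
    have hc : cos x ≠ 0 := (Real.cos_pos_of_mem_Ioo hx).ne'
    have h1 : HasDerivAt (fun θ : ℝ => θ^2 - π^2/4) (2*x) x := by
      simpa using (hasDerivAt_pow 2 x).sub_const (π^2/4)
    have h2 : HasDerivAt F (1 + ((2*x) * tan x + (x^2 - π^2/4) * (1 / cos x ^ 2))) x :=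
      (hasDerivAt_id x).add (h1.mul (Real.hasDerivAt_tan hc))
    convert h2 using 1
    unfold xi
    rw [Real.tan_eq_sin_div_cos]
    field_simp
    ring
  -- limits of F at the endpoints
  have hFeq1 : ∀ θ : ℝ, F θ = θ + ((θ - π/2) * sin θ) * ((θ + π/2) / cos θ) := by
    intro θ
    simp only [hF, Real.tan_eq_sin_div_cos, div_eq_mul_inv]
    ring
  have hFeq2 : ∀ θ : ℝ, F θ = θ + ((θ + π/2) * sin θ) * ((θ - π/2) / cos θ) := by
    intro θ
    simp only [hF, Real.tan_eq_sin_div_cos, div_eq_mul_inv]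
    ring
  have hslope_a : Tendsto (fun θ : ℝ => (θ + π/2) / cos θ) (𝓝[≠] (-(π/2))) (𝓝 1) := by
    have h := hasDerivAt_iff_tendsto_slope.1 (Real.hasDerivAt_cos (-(π/2)))
    have h' : Tendsto (fun θ : ℝ => cos θ / (θ + π/2)) (𝓝[≠] (-(π/2))) (𝓝 1) := by
      have : -Real.sin (-(π/2)) = 1 := by simp
      rw [this] at h
      refine h.congr (fun θ => ?_)
      rw [slope_def_field, sub_neg_eq_add, Real.cos_neg, Real.cos_pi_div_two, sub_zero]
    have := h'.inv₀ one_ne_zero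
    simp only [inv_one] at this
    refine this.congr (fun θ => ?_)
    rw [inv_div]
  have hslope_b : Tendsto (fun θ : ℝ => (θ - π/2) / cos θ) (𝓝[≠] (π/2)) (𝓝 (-1)) := by
    have h := hasDerivAt_iff_tendsto_slope.1 (Real.hasDerivAt_cos (π/2))
    have h' : Tendsto (fun θ : ℝ => cos θ / (θ - π/2)) (𝓝[≠] (π/2)) (𝓝 (-1)) := by
      have : -Real.sin (π/2) = -1 := by simp
      rw [this] at h
      refine h.congr (fun θ => ?_)
      rw [slope_def_field, Real.cos_pi_div_two, sub_zero]
    have := h'.inv₀ (by norm_num)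
    refine (this.congr (fun θ => by rw [inv_div])).mono_right (by norm_num)
  have ha : Tendsto F (𝓝[>] (-(π/2))) (𝓝 (π/2)) := by
    have hmono : 𝓝[>] (-(π/2) : ℝ) ≤ 𝓝[≠] (-(π/2)) :=
      nhdsWithin_mono _ (fun x hx => ne_of_gt hx)
    have h1 : Tendsto (fun θ : ℝ => θ + ((θ - π/2) * sin θ) * ((θ + π/2) / cos θ))
        (𝓝[>] (-(π/2))) (𝓝 ((-(π/2)) + ((-(π/2) - π/2) * sin (-(π/2))) * 1)) := by
      apply Tendsto.add
      · exact tendsto_id.mono_left nhdsWithin_le_nhds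
      · exact (((tendsto_id.sub_const _).mul
          (Real.continuous_sin.tendsto _)).mono_left nhdsWithin_le_nhds).mul
          (hslope_a.mono_left hmono)
    have : (-(π/2)) + ((-(π/2) - π/2) * sin (-(π/2))) * 1 = π/2 := by
      simp; ring
    rw [this] at h1
    exact h1.congr (fun θ => (hFeq1 θ).symm)
  have hb : Tendsto F (𝓝[<] (π/2)) (𝓝 (-(π/2))) := by
    have hmono : 𝓝[<] (π/2 : ℝ) ≤ 𝓝[≠] (π/2) :=
      nhdsWithin_mono _ (fun x hx => ne_of_lt hx)
    have h1 : Tendsto (fun θ : ℝ => θ + ((θ + π/2) * sin θ) * ((θ - π/2) / cos θ))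
        (𝓝[<] (π/2)) (𝓝 ((π/2) + ((π/2 + π/2) * sin (π/2)) * (-1))) := by
      apply Tendsto.add
      · exact tendsto_id.mono_left nhdsWithin_le_nhds
      · exact (((tendsto_id.add_const _).mul
          (Real.continuous_sin.tendsto _)).mono_left nhdsWithin_le_nhds).mul
          (hslope_b.mono_left hmono)
    have : (π/2) + ((π/2 + π/2) * sin (π/2)) * (-1) = -(π/2) := by
      simp; ring
    rw [this] at h1
    exact h1.congr (fun θ => (hFeq2 θ).symm)
  have := intervalIntegral.integral_eq_sub_of_hasDerivAt_of_tendsto hab hderiv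
    xi_integrable ha hb
  rw [this]
  ring
end

section
/- The derivative of ξ is strictly negative on the interval (−π/2, 0) and strictly positive on the interval (0, π/2). -/
open Real Set Filter Topology

lemma hda_congr {f g : ℝ → ℝ} {a b x : ℝ} (h : HasDerivAt g b x) (hf : f = g)
    (ha : a = b) : HasDerivAt f a x := hf ▸ ha ▸ h

noncomputable def gg (θ : ℝ) : ℝ :=
  Real.sin θ * Real.cos θ ^ 2 + 2 * θ * Real.cos θ + (θ ^ 2 - Real.pi ^ 2 / 4) * Real.sin θ

noncomputable def hh (θ : ℝ) : ℝ := 3 * Real.cos θ ^ 2 + θ ^ 2 - Real.pi ^ 2 / 4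

noncomputable def kk (θ : ℝ) : ℝ := 2 * θ - 6 * Real.sin θ * Real.cos θ

lemma hasDerivAt_kk (θ : ℝ) :
    HasDerivAt kk (2 - 6 * (Real.cos θ ^ 2 - Real.sin θ ^ 2)) θ := by
  have h := (((hasDerivAt_id θ).const_mul 2).sub
    (((Real.hasDerivAt_sin θ).mul (Real.hasDerivAt_cos θ)).const_mul 6))
  refine hda_congr h ?_ ?_
  · funext x; simp only [kk, id_eq, Pi.sub_apply, Pi.mul_apply]; ring
  · ring

lemma hasDerivAt_hh (θ : ℝ) : HasDerivAt hh (kk θ) θ := by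
  have h := ((((Real.hasDerivAt_cos θ).pow 2).const_mul 3).add
    (hasDerivAt_pow 2 θ)).sub_const (Real.pi ^ 2 / 4)
  refine hda_congr h rfl ?_
  unfold kk
  push_cast
  ring

lemma hasDerivAt_gg (θ : ℝ) : HasDerivAt gg (Real.cos θ * hh θ) θ := by
  have h := (((Real.hasDerivAt_sin θ).mul ((Real.hasDerivAt_cos θ).pow 2)).add
    (((hasDerivAt_id θ).const_mul 2).mul (Real.hasDerivAt_cos θ))).add
    (((hasDerivAt_pow 2 θ).sub_const (Real.pi ^ 2 / 4)).mul (Real.hasDerivAt_sin θ))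
  refine hda_congr h rfl ?_
  unfold hh
  simp only [id_eq, Pi.pow_apply]
  push_cast
  linear_combination (2 * Real.cos θ) * (Real.sin_sq_add_cos_sq θ)

lemma kk_zero : kk 0 = 0 := by simp [kk]

lemma kk_pi_div_two : kk (Real.pi / 2) = Real.pi := by
  simp [kk, Real.cos_pi_div_two]
  ring

lemma hh_pi_div_two : hh (Real.pi / 2) = 0 := by
  simp [hh, Real.cos_pi_div_two]
  ring

lemma gg_zero : gg 0 = 0 := by simp [gg]

lemma gg_pi_div_two : gg (Real.pi / 2) = 0 := by
  simp [gg, Real.cos_pi_div_two]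
  ring

lemma gg_cont : Continuous gg := by unfold gg; continuity
lemma hh_cont : Continuous hh := by unfold hh; continuity
lemma kk_cont : Continuous kk := by unfold kk; continuity

-- the turning point of kk
noncomputable def m0 : ℝ := Real.arccos (1/3) / 2

lemma m0_pos : 0 < m0 := by
  have : (1:ℝ)/3 < 1 := by norm_num
  have := Real.arccos_pos.mpr this
  unfold m0; linarith

lemma m0_lt : m0 < Real.pi / 2 := by
  have h := Real.arccos_lt_pi_div_two.mpr (by norm_num : (0:ℝ) < 1/3)
  have hpi := Real.pi_pos
  unfold m0; linarith

lemma kk_strictAntiOn : StrictAntiOn kk (Set.Icc 0 m0) := by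
  apply strictAntiOn_of_deriv_neg (convex_Icc _ _) kk_cont.continuousOn
  intro t ht
  rw [interior_Icc] at ht
  rw [(hasDerivAt_kk t).deriv]
  have h1 : Real.cos (2 * m0) < Real.cos (2 * t) := by
    apply Real.cos_lt_cos_of_nonneg_of_le_pi (by linarith [ht.1])
    · unfold m0; rw [mul_div_cancel₀ _ (two_ne_zero)]; exact Real.arccos_le_pi _
    · linarith [ht.2]
  have h2 : Real.cos (2 * m0) = 1/3 := by
    unfold m0; rw [mul_div_cancel₀ _ (two_ne_zero)]
    exact Real.cos_arccos (by norm_num) (by norm_num)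
  have h3 : Real.cos t ^ 2 - Real.sin t ^ 2 = Real.cos (2 * t) := by
    rw [Real.cos_two_mul]
    linear_combination (-1 : ℝ) * (Real.sin_sq_add_cos_sq t)
  rw [h3]
  linarith [h1, h2]

lemma kk_strictMonoOn : StrictMonoOn kk (Set.Icc m0 (Real.pi / 2)) := by
  apply strictMonoOn_of_deriv_pos (convex_Icc _ _) kk_cont.continuousOn
  intro t ht
  rw [interior_Icc] at ht
  rw [(hasDerivAt_kk t).deriv]
  have h1 : Real.cos (2 * t) < Real.cos (2 * m0) := by
    apply Real.cos_lt_cos_of_nonneg_of_le_pi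
    · have := m0_pos; linarith
    · linarith [ht.2, Real.pi_pos]
    · linarith [ht.1]
  have h2 : Real.cos (2 * m0) = 1/3 := by
    unfold m0; rw [mul_div_cancel₀ _ (two_ne_zero)]
    exact Real.cos_arccos (by norm_num) (by norm_num)
  have h3 : Real.cos t ^ 2 - Real.sin t ^ 2 = Real.cos (2 * t) := by
    rw [Real.cos_two_mul]
    linear_combination (-1 : ℝ) * (Real.sin_sq_add_cos_sq t)
  rw [h3]
  linarith [h1, h2]

lemma kk_m0_neg : kk m0 < 0 := by
  have := kk_strictAntiOn (Set.left_mem_Icc.mpr m0_pos.le)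
    ⟨m0_pos.le, le_refl _⟩ m0_pos
  rw [kk_zero] at this
  exact this

-- the zero of kk in (m0, π/2)
lemma exists_m : ∃ m ∈ Set.Ioo m0 (Real.pi / 2), kk m = 0 := by
  have hsub := intermediate_value_Ioo m0_lt.le kk_cont.continuousOn
  have h0 : (0:ℝ) ∈ Set.Ioo (kk m0) (kk (Real.pi / 2)) := by
    rw [kk_pi_div_two]
    exact ⟨kk_m0_neg, Real.pi_pos⟩
  obtain ⟨m, hm, hkm⟩ := hsub h0
  exact ⟨m, hm, hkm⟩

section main

open Classical

noncomputable def mz : ℝ := Classical.choose exists_m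

lemma mz_mem : mz ∈ Set.Ioo m0 (Real.pi / 2) := (Classical.choose_spec exists_m).1
lemma kk_mz : kk mz = 0 := (Classical.choose_spec exists_m).2

lemma kk_neg : ∀ t ∈ Set.Ioo (0:ℝ) mz, kk t < 0 := by
  intro t ht
  rcases le_or_gt t m0 with h | h
  · have := kk_strictAntiOn (Set.left_mem_Icc.mpr m0_pos.le) ⟨ht.1.le, h⟩ ht.1
    rw [kk_zero] at this; exact this
  · have := kk_strictMonoOn ⟨h.le, by linarith [mz_mem.2, ht.2]⟩
      ⟨mz_mem.1.le, mz_mem.2.le⟩ ht.2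
    rw [kk_mz] at this; exact this

lemma kk_pos : ∀ t ∈ Set.Ioo mz (Real.pi / 2), 0 < kk t := by
  intro t ht
  have := kk_strictMonoOn ⟨mz_mem.1.le, mz_mem.2.le⟩
    ⟨by linarith [mz_mem.1, ht.1], ht.2.le⟩ ht.1
  rw [kk_mz] at this; exact this

lemma hh_strictAntiOn : StrictAntiOn hh (Set.Icc 0 mz) := by
  apply strictAntiOn_of_deriv_neg (convex_Icc _ _) hh_cont.continuousOn
  intro t ht
  rw [interior_Icc] at ht
  rw [(hasDerivAt_hh t).deriv]
  exact kk_neg t ht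

lemma hh_strictMonoOn : StrictMonoOn hh (Set.Icc mz (Real.pi / 2)) := by
  apply strictMonoOn_of_deriv_pos (convex_Icc _ _) hh_cont.continuousOn
  intro t ht
  rw [interior_Icc] at ht
  rw [(hasDerivAt_hh t).deriv]
  exact kk_pos t ht

lemma hh_key {t s : ℝ} (ht : 0 < t) (hts : t < s) (hs : s < Real.pi / 2)
    (hht : hh t ≤ 0) : hh s < 0 := by
  rcases le_or_gt s mz with h | h
  · have := hh_strictAntiOn ⟨ht.le, by linarith⟩ ⟨by linarith, h⟩ hts
    linarith
  · have := hh_strictMonoOn ⟨h.le, hs.le⟩ ⟨mz_mem.2.le, le_refl _⟩ hs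
    rw [hh_pi_div_two] at this
    exact this

lemma gg_pos : ∀ θ ∈ Set.Ioo (0:ℝ) (Real.pi / 2), 0 < gg θ := by
  intro θ hθ
  by_cases H : ∀ t ∈ Set.Ioo (0:ℝ) θ, 0 < hh t
  · have hmono : StrictMonoOn gg (Set.Icc 0 θ) := by
      apply strictMonoOn_of_deriv_pos (convex_Icc _ _) gg_cont.continuousOn
      intro t ht
      rw [interior_Icc] at ht
      rw [(hasDerivAt_gg t).deriv]
      have hc : 0 < Real.cos t := Real.cos_pos_of_mem_Ioo
        ⟨by linarith [ht.1, Real.pi_pos], by linarith [ht.2, hθ.2]⟩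
      exact mul_pos hc (H t ht)
    have := hmono (Set.left_mem_Icc.mpr hθ.1.le) ⟨hθ.1.le, le_refl _⟩ hθ.1
    rw [gg_zero] at this; exact this
  · push_neg at H
    obtain ⟨t₀, ht₀, hht₀⟩ := H
    have hanti : StrictAntiOn gg (Set.Icc θ (Real.pi / 2)) := by
      apply strictAntiOn_of_deriv_neg (convex_Icc _ _) gg_cont.continuousOn
      intro s hs
      rw [interior_Icc] at hs
      rw [(hasDerivAt_gg s).deriv]
      have hc : 0 < Real.cos s := Real.cos_pos_of_mem_Ioo
        ⟨by linarith [hs.1, hθ.1, Real.pi_pos], hs.2⟩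
      have hhs : hh s < 0 := hh_key ht₀.1 (lt_trans ht₀.2 hs.1) hs.2 hht₀
      exact mul_neg_of_pos_of_neg hc hhs
    have := hanti ⟨le_refl _, hθ.2.le⟩ ⟨hθ.2.le, le_refl _⟩ hθ.2
    rw [gg_pi_div_two] at this; exact this

lemma xi_hasDerivAt (θ : ℝ) (hc : Real.cos θ ≠ 0) :
    HasDerivAt xi (2 * gg θ / Real.cos θ ^ 3) θ := by
  have h1 := Real.hasDerivAt_sin θ
  have h2 := Real.hasDerivAt_cos θ
  have hN : HasDerivAt
      (fun x => Real.cos x ^ 2 + 2 * x * Real.sin x * Real.cos x + x ^ 2 - Real.pi ^ 2 / 4)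
      (4 * θ * Real.cos θ ^ 2) θ := by
    have h := (((h2.pow 2).add
      ((((hasDerivAt_id θ).const_mul 2).mul h1).mul h2)).add
      (hasDerivAt_pow 2 θ)).sub_const (Real.pi ^ 2 / 4)
    refine hda_congr h rfl ?_
    simp only [id_eq, Pi.mul_apply]
    push_cast
    linear_combination (2 * θ) * (Real.sin_sq_add_cos_sq θ)
  have hD : HasDerivAt (fun x => Real.cos x ^ 2)
      ((2:ℕ) * Real.cos θ ^ (2-1) * (-Real.sin θ)) θ := h2.pow 2
  have hdiv := hN.div hD (pow_ne_zero 2 hc)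
  refine hda_congr hdiv rfl ?_
  rw [div_eq_div_iff (pow_ne_zero 3 hc) (pow_ne_zero 2 (pow_ne_zero 2 hc))]
  unfold gg
  push_cast
  linear_combination (-(4 * θ * Real.cos θ ^ 5)) * (Real.sin_sq_add_cos_sq θ)

lemma gg_odd (θ : ℝ) : gg (-θ) = - gg θ := by
  simp [gg, Real.sin_neg, Real.cos_neg]
  ring

theorem xi_deriv_sign :
    (∀ θ ∈ Set.Ioo (-(Real.pi / 2)) (0 : ℝ), deriv xi θ < 0) ∧
    (∀ θ ∈ Set.Ioo (0 : ℝ) (Real.pi / 2), 0 < deriv xi θ) := by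
  constructor
  · intro θ hθ
    have hc : 0 < Real.cos θ := Real.cos_pos_of_mem_Ioo
      ⟨hθ.1, by linarith [hθ.2, Real.pi_pos]⟩
    rw [(xi_hasDerivAt θ hc.ne').deriv]
    have hneg : gg θ < 0 := by
      have h := gg_pos (-θ) ⟨by linarith [hθ.2], by linarith [hθ.1]⟩
      rw [gg_odd θ] at h
      linarith
    apply div_neg_of_neg_of_pos (by linarith) (by positivity)
  · intro θ hθ
    have hc : 0 < Real.cos θ := Real.cos_pos_of_mem_Ioo
      ⟨by linarith [hθ.1, Real.pi_pos], hθ.2⟩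
    rw [(xi_hasDerivAt θ hc.ne').deriv]
    have hpos := gg_pos θ hθ
    positivity

end main
end

section
/- For every θ in (−π/2, π/2), it holds that 1 − π²/4 ≤ ξ(θ) ≤ 0; moreover ξ(0) = 1 − π²/4, so the lower bound is attained at θ = 0. -/
open Real Set Filter Topology

noncomputable def Efun (θ : ℝ) : ℝ := Real.cos θ ^ 2 + 2 * θ * Real.sin θ * Real.cos θ + θ ^ 2
noncomputable def Hfun (θ : ℝ) : ℝ := 2 * θ * Real.cos θ - (Real.pi ^ 2 / 4 - 1) * Real.sin θ
noncomputable def Gfun (θ : ℝ) : ℝ :=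
  θ ^ 2 + 2 * θ * Real.sin θ * Real.cos θ - Real.pi ^ 2 / 4 * Real.sin θ ^ 2
noncomputable def H'fun (θ : ℝ) : ℝ := (3 - Real.pi ^ 2 / 4) * Real.cos θ - 2 * θ * Real.sin θ

lemma hasDerivAt_E (θ : ℝ) : HasDerivAt Efun (4 * θ * Real.cos θ ^ 2) θ := by
  have h1 := ((Real.hasDerivAt_cos θ).pow 2)
  have h2 := (((hasDerivAt_id θ).const_mul 2).mul (Real.hasDerivAt_sin θ)).mul
      (Real.hasDerivAt_cos θ)
  have h3 := (hasDerivAt_id θ).pow 2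
  have := (h1.add h2).add h3
  refine this.congr_deriv (Eq.symm ?_)
  simp only [id_eq]
  push_cast
  norm_num
  linear_combination 2*θ*(Real.sin_sq_add_cos_sq θ)

lemma hasDerivAt_H (θ : ℝ) : HasDerivAt Hfun (H'fun θ) θ := by
  have h1 := ((hasDerivAt_id θ).const_mul 2).mul (Real.hasDerivAt_cos θ)
  have h2 := (Real.hasDerivAt_sin θ).const_mul (Real.pi ^ 2 / 4 - 1)
  have := h1.sub h2
  refine this.congr_deriv (Eq.symm ?_)
  simp only [id_eq, H'fun]
  ring

lemma hasDerivAt_H' (θ : ℝ) :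
    HasDerivAt H'fun (-((5 - Real.pi ^ 2 / 4) * Real.sin θ) - 2 * θ * Real.cos θ) θ := by
  have h1 := (Real.hasDerivAt_cos θ).const_mul (3 - Real.pi ^ 2 / 4)
  have h2 := ((hasDerivAt_id θ).const_mul 2).mul (Real.hasDerivAt_sin θ)
  have := h1.sub h2
  refine this.congr_deriv (Eq.symm ?_)
  simp only [id_eq]
  ring

lemma hasDerivAt_G (θ : ℝ) : HasDerivAt Gfun (2 * Real.cos θ * Hfun θ) θ := by
  have h1 := (hasDerivAt_id θ).pow 2
  have h2 := (((hasDerivAt_id θ).const_mul 2).mul (Real.hasDerivAt_sin θ)).mul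
      (Real.hasDerivAt_cos θ)
  have h3 := ((Real.hasDerivAt_sin θ).pow 2).const_mul (Real.pi ^ 2 / 4)
  have := (h1.add h2).sub h3
  refine this.congr_deriv (Eq.symm ?_)
  simp only [id_eq, Hfun]
  push_cast
  norm_num
  linear_combination (2*θ - Real.pi^2/2*Real.cos θ + Real.pi^2/2*Real.cos θ)*(Real.sin_sq_add_cos_sq θ)

lemma E_le {θ : ℝ} (hθ : θ ∈ Set.Icc 0 (Real.pi / 2)) : Efun θ ≤ Real.pi ^ 2 / 4 := by
  have hmono : MonotoneOn Efun (Set.Icc 0 (Real.pi / 2)) := by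
    apply monotoneOn_of_deriv_nonneg (convex_Icc _ _)
    · exact fun x _ => (hasDerivAt_E x).continuousAt.continuousWithinAt
    · exact fun x _ => (hasDerivAt_E x).differentiableAt.differentiableWithinAt
    · intro x hx
      rw [interior_Icc] at hx
      rw [(hasDerivAt_E x).deriv]
      have := hx.1.le
      positivity
  have hend : (Real.pi / 2) ∈ Set.Icc 0 (Real.pi / 2) := ⟨by positivity, le_refl _⟩
  have := hmono hθ hend hθ.2
  have hval : Efun (Real.pi / 2) = Real.pi ^ 2 / 4 := by
    simp [Efun, Real.cos_pi_div_two, Real.sin_pi_div_two]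
    ring
  linarith

lemma H_concave : ConcaveOn ℝ (Set.Icc 0 (Real.pi / 2)) Hfun := by
  have hd : deriv Hfun = H'fun := funext fun x => (hasDerivAt_H x).deriv
  apply concaveOn_of_deriv2_nonpos (convex_Icc _ _)
  · exact fun x _ => (hasDerivAt_H x).continuousAt.continuousWithinAt
  · exact fun x _ => (hasDerivAt_H x).differentiableAt.differentiableWithinAt
  · rw [hd]
    exact fun x _ => (hasDerivAt_H' x).differentiableAt.differentiableWithinAt
  · intro x hx
    rw [interior_Icc] at hx
    have h2 : deriv^[2] Hfun x = deriv (deriv Hfun) x := by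
      simp [Function.iterate_succ_apply']
    rw [h2, hd, (hasDerivAt_H' x).deriv]
    have hs : 0 ≤ Real.sin x := Real.sin_nonneg_of_nonneg_of_le_pi hx.1.le
      (by linarith [Real.pi_pos, hx.2])
    have hc : 0 ≤ Real.cos x := Real.cos_nonneg_of_mem_Icc ⟨by linarith [hx.1, Real.pi_pos], hx.2.le⟩
    have hpi : Real.pi ^ 2 / 4 < 5 := by nlinarith [Real.pi_lt_d2, Real.pi_gt_three]
    nlinarith [hx.1.le]

lemma Hfun_zero : Hfun 0 = 0 := by simp [Hfun]

lemma G_nonneg {θ : ℝ} (hθ : θ ∈ Set.Icc 0 (Real.pi / 2)) : 0 ≤ Gfun θ := by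
  rcases eq_or_lt_of_le hθ.1 with h0 | h0
  · simp [Gfun, ← h0]
  have hmem0 : (0 : ℝ) ∈ Set.Icc 0 (Real.pi / 2) := ⟨le_refl _, by positivity⟩
  by_cases hH : 0 ≤ Hfun θ
  · -- H ≥ 0 on [0, θ] by concavity, so G is monotone there
    have hmono : MonotoneOn Gfun (Set.Icc 0 θ) := by
      apply monotoneOn_of_deriv_nonneg (convex_Icc _ _)
      · exact fun x _ => (hasDerivAt_G x).continuousAt.continuousWithinAt
      · exact fun x _ => (hasDerivAt_G x).differentiableAt.differentiableWithinAt
      · intro x hx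
        rw [interior_Icc] at hx
        rw [(hasDerivAt_G x).deriv]
        have hc : 0 ≤ Real.cos x :=
          Real.cos_nonneg_of_mem_Icc ⟨by linarith [hx.1, Real.pi_pos], by linarith [hx.2, hθ.2]⟩
        have hHx : 0 ≤ Hfun x := by
          have hb0 : 0 ≤ x / θ := div_nonneg hx.1.le h0.le
          have hb1 : x / θ ≤ 1 := by
            rw [div_le_one h0]; exact hx.2.le
          have hcomb := H_concave.2 hmem0 hθ (show (0:ℝ) ≤ 1 - x / θ by linarith)
            hb0 (by ring)
          have hx' : (1 - x / θ) • (0:ℝ) + (x / θ) • θ = x := by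
            simp [smul_eq_mul, h0.ne']
          rw [hx', Hfun_zero] at hcomb
          have : 0 ≤ (x / θ) • Hfun θ := smul_nonneg hb0 hH
          simpa using le_trans (by simpa using this) hcomb
        positivity
    have h1 := hmono ⟨le_refl _, h0.le⟩ ⟨h0.le, le_refl _⟩ h0.le
    have h2 : Gfun 0 = 0 := by simp [Gfun]
    linarith
  · -- H < 0 on [θ, π/2] by concavity, so G is antitone there
    push_neg at hH
    have hanti : AntitoneOn Gfun (Set.Icc θ (Real.pi / 2)) := by
      apply antitoneOn_of_deriv_nonpos (convex_Icc _ _)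
      · exact fun x _ => (hasDerivAt_G x).continuousAt.continuousWithinAt
      · exact fun x _ => (hasDerivAt_G x).differentiableAt.differentiableWithinAt
      · intro x hx
        rw [interior_Icc] at hx
        rw [(hasDerivAt_G x).deriv]
        have hc : 0 ≤ Real.cos x :=
          Real.cos_nonneg_of_mem_Icc ⟨by linarith [hx.1, h0, Real.pi_pos], hx.2.le⟩
        have hxpos : 0 < x := lt_trans h0 hx.1
        have hHx : Hfun x ≤ 0 := by
          by_contra hpos
          push_neg at hpos
          have hxI : x ∈ Set.Icc 0 (Real.pi / 2) := ⟨hxpos.le, hx.2.le⟩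
          have hb0 : 0 ≤ θ / x := by positivity
          have hb1 : θ / x ≤ 1 := by
            rw [div_le_one hxpos]; exact hx.1.le
          have hcomb := H_concave.2 hmem0 hxI (show (0:ℝ) ≤ 1 - θ / x by linarith)
            hb0 (by ring)
          have hx' : (1 - θ / x) • (0:ℝ) + (θ / x) • x = θ := by
            simp [smul_eq_mul, hxpos.ne']
          rw [hx', Hfun_zero] at hcomb
          have hbpos : 0 < θ / x := by positivity
          simp only [smul_eq_mul, mul_zero, zero_mul, zero_add] at hcomb
          nlinarith [mul_pos hbpos hpos]
        have : 2 * Real.cos x * Hfun x ≤ 0 :=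
          mul_nonpos_of_nonneg_of_nonpos (by positivity) hHx
        exact this
    have hend : (Real.pi / 2) ∈ Set.Icc θ (Real.pi / 2) := ⟨hθ.2, le_refl _⟩
    have h1 := hanti ⟨le_refl _, hθ.2⟩ hend hθ.2
    have h2 : Gfun (Real.pi / 2) = 0 := by
      simp [Gfun, Real.cos_pi_div_two, Real.sin_pi_div_two]
      ring
    linarith

lemma Efun_neg (θ : ℝ) : Efun (-θ) = Efun θ := by
  simp only [Efun, Real.sin_neg, Real.cos_neg]
  ring

lemma Gfun_neg (θ : ℝ) : Gfun (-θ) = Gfun θ := by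
  simp only [Gfun, Real.sin_neg, Real.cos_neg]
  ring

theorem xi_bounds :
    (∀ θ ∈ Set.Ioo (-(Real.pi / 2)) (Real.pi / 2),
      1 - Real.pi ^ 2 / 4 ≤ xi θ ∧ xi θ ≤ 0) ∧
    xi 0 = 1 - Real.pi ^ 2 / 4 := by
  constructor
  · intro θ hθ
    have hc : 0 < Real.cos θ := Real.cos_pos_of_mem_Ioo hθ
    have hc2 : 0 < Real.cos θ ^ 2 := by positivity
    have habs : |θ| ∈ Set.Icc 0 (Real.pi / 2) := by
      constructor
      · exact abs_nonneg θ
      · rcases abs_cases θ with ⟨h, _⟩ | ⟨h, _⟩ <;> rw [h] <;>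
          [exact hθ.2.le; linarith [hθ.1]]
    have hE : Efun θ ≤ Real.pi ^ 2 / 4 := by
      have h1 := E_le habs
      rcases abs_cases θ with ⟨h, _⟩ | ⟨h, _⟩ <;> rw [h] at h1
      · exact h1
      · rwa [Efun_neg] at h1
    have hG : 0 ≤ Gfun θ := by
      have h1 := G_nonneg habs
      rcases abs_cases θ with ⟨h, _⟩ | ⟨h, _⟩ <;> rw [h] at h1
      · exact h1
      · rwa [Gfun_neg] at h1
    have hpyth := Real.sin_sq_add_cos_sq θ
    constructor
    · rw [xi, le_div_iff₀ hc2]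
      simp only [Gfun] at hG
      nlinarith
    · apply div_nonpos_of_nonpos_of_nonneg _ hc2.le
      simp only [Efun] at hE
      linarith
  · simp [xi]
end

section
/- ξ(θ) tends to 0 as θ tends to π/2 from the left, and ξ(θ) tends to 0 as θ tends to −π/2 from the right; consequently, the extension of ξ to [−π/2, π/2] obtained by setting ξ(π/2) = ξ(−π/2) = 0 is continuous on the closed interval [−π/2, π/2]. -/
open Real Set Filter Topology

lemma xi_num_hasDerivAt (x : ℝ) :
    HasDerivAt (fun θ : ℝ => Real.cos θ ^ 2 + 2 * θ * Real.sin θ * Real.cos θ + θ ^ 2 -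
      Real.pi ^ 2 / 4) (4 * x * Real.cos x ^ 2) x := by
  have h1 : HasDerivAt (fun θ : ℝ => Real.cos θ ^ 2)
      (2 * Real.cos x ^ 1 * (-Real.sin x)) x := (Real.hasDerivAt_cos x).pow 2
  have h2 : HasDerivAt (fun θ : ℝ => 2 * θ * Real.sin θ * Real.cos θ)
      ((2 * 1 * Real.sin x + 2 * x * Real.cos x) * Real.cos x +
        2 * x * Real.sin x * (-Real.sin x)) x := by
    exact ((((hasDerivAt_id x).const_mul 2).mul (Real.hasDerivAt_sin x)).mul
      (Real.hasDerivAt_cos x))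
  have h3 : HasDerivAt (fun θ : ℝ => θ ^ 2) (2 * x) x := by
    simpa using hasDerivAt_pow 2 x
  have h4 := ((h1.add h2).add h3).sub_const (Real.pi ^ 2 / 4)
  refine h4.congr_deriv (Eq.symm ?_)
  have hs := Real.sin_sq_add_cos_sq x
  linear_combination 2 * x * hs

lemma xi_denom_hasDerivAt (x : ℝ) :
    HasDerivAt (fun θ : ℝ => Real.cos θ ^ 2) (-(2 * Real.sin x * Real.cos x)) x := by
  have h1 : HasDerivAt (fun θ : ℝ => Real.cos θ ^ 2)
      (2 * Real.cos x ^ 1 * (-Real.sin x)) x := (Real.hasDerivAt_cos x).pow 2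
  convert h1 using 1; ring

lemma xi_left_limit :
    Filter.Tendsto xi (nhdsWithin (Real.pi / 2) (Set.Iio (Real.pi / 2))) (nhds 0) := by
  have hpi : (0 : ℝ) < Real.pi / 2 := by positivity
  have hfb : Tendsto (fun θ : ℝ => Real.cos θ ^ 2 + 2 * θ * Real.sin θ * Real.cos θ + θ ^ 2 -
      Real.pi ^ 2 / 4) (nhdsWithin (Real.pi / 2) (Set.Iio (Real.pi / 2))) (nhds 0) := by
    have hc : Continuous (fun θ : ℝ => Real.cos θ ^ 2 + 2 * θ * Real.sin θ * Real.cos θ + θ ^ 2 -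
        Real.pi ^ 2 / 4) := by continuity
    have := hc.tendsto (Real.pi / 2)
    rw [show Real.cos (Real.pi / 2) ^ 2 + 2 * (Real.pi / 2) * Real.sin (Real.pi / 2) *
        Real.cos (Real.pi / 2) + (Real.pi / 2) ^ 2 - Real.pi ^ 2 / 4 = 0 by
      simp [Real.cos_pi_div_two]; ring] at this
    exact this.mono_left nhdsWithin_le_nhds
  have hgb : Tendsto (fun θ : ℝ => Real.cos θ ^ 2)
      (nhdsWithin (Real.pi / 2) (Set.Iio (Real.pi / 2))) (nhds 0) := by
    have hc : Continuous (fun θ : ℝ => Real.cos θ ^ 2) := by continuity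
    have := hc.tendsto (Real.pi / 2)
    rw [show Real.cos (Real.pi / 2) ^ 2 = 0 by simp [Real.cos_pi_div_two]] at this
    exact this.mono_left nhdsWithin_le_nhds
  have hdiv : Tendsto (fun x : ℝ => 4 * x * Real.cos x ^ 2 / -(2 * Real.sin x * Real.cos x))
      (nhdsWithin (Real.pi / 2) (Set.Iio (Real.pi / 2))) (nhds 0) := by
    have hcont : Tendsto (fun x : ℝ => -(2 * x) * Real.cos x / Real.sin x)
        (nhdsWithin (Real.pi / 2) (Set.Iio (Real.pi / 2))) (nhds 0) := by
      have hc : ContinuousAt (fun x : ℝ => -(2 * x) * Real.cos x / Real.sin x) (Real.pi / 2) := by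
        apply ContinuousAt.div
        · fun_prop
        · fun_prop
        · simp [Real.sin_pi_div_two]
      have := hc.tendsto
      rw [show -(2 * (Real.pi / 2)) * Real.cos (Real.pi / 2) / Real.sin (Real.pi / 2) = 0 by
        simp [Real.cos_pi_div_two]] at this
      exact this.mono_left nhdsWithin_le_nhds
    apply hcont.congr'
    filter_upwards [Ioo_mem_nhdsLT_of_mem (⟨hpi, le_refl _⟩ : Real.pi / 2 ∈ Ioc 0 (Real.pi / 2))]
      with x hx
    obtain ⟨hx1, hx2⟩ := hx
    have hs : Real.sin x ≠ 0 :=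
      ne_of_gt (Real.sin_pos_of_pos_of_lt_pi hx1 (by linarith [Real.pi_pos]))
    have hc : Real.cos x ≠ 0 :=
      ne_of_gt (Real.cos_pos_of_mem_Ioo ⟨by linarith, hx2⟩)
    field_simp
    ring
  have hL := HasDerivAt.lhopital_zero_left_on_Ioo (f' := fun x => 4 * x * Real.cos x ^ 2)
    (g' := fun x => -(2 * Real.sin x * Real.cos x)) hpi
    (fun x _ => xi_num_hasDerivAt x) (fun x _ => xi_denom_hasDerivAt x)
    (fun x hx => by
      obtain ⟨hx1, hx2⟩ := hx
      have hs : 0 < Real.sin x := Real.sin_pos_of_pos_of_lt_pi hx1 (by linarith [Real.pi_pos])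
      have hc : 0 < Real.cos x := Real.cos_pos_of_mem_Ioo ⟨by linarith, hx2⟩
      simp only [neg_ne_zero]
      positivity)
    hfb hgb hdiv
  exact hL

theorem xi_boundary_limits :
    Filter.Tendsto xi (nhdsWithin (Real.pi / 2) (Set.Iio (Real.pi / 2))) (nhds 0) ∧
    Filter.Tendsto xi (nhdsWithin (-(Real.pi / 2)) (Set.Ioi (-(Real.pi / 2)))) (nhds 0) ∧
    ContinuousOn
      (fun θ => if θ = Real.pi / 2 ∨ θ = -(Real.pi / 2) then 0 else xi θ)
      (Set.Icc (-(Real.pi / 2)) (Real.pi / 2)) := by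
  have h1 := xi_left_limit
  have hxi_even : ∀ θ : ℝ, xi (-θ) = xi θ := by
    intro θ
    unfold xi
    rw [Real.cos_neg, Real.sin_neg, neg_sq]
    ring_nf
  have h2 : Filter.Tendsto xi (nhdsWithin (-(Real.pi / 2)) (Set.Ioi (-(Real.pi / 2))))
      (nhds 0) := by
    have := h1.comp (tendsto_neg_nhdsGT_neg (a := Real.pi / 2))
    exact this.congr fun θ => hxi_even θ
  have xi_pi2 : xi (Real.pi / 2) = 0 := by
    simp [xi, Real.cos_pi_div_two]
  have xi_neg_pi2 : xi (-(Real.pi / 2)) = 0 := by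
    rw [hxi_even, xi_pi2]
  have hF : ∀ θ : ℝ, (if θ = Real.pi / 2 ∨ θ = -(Real.pi / 2) then (0:ℝ) else xi θ) = xi θ := by
    intro θ
    split
    · rename_i h
      rcases h with h | h <;> rw [h] <;> simp [xi_pi2, xi_neg_pi2]
    · rfl
  refine ⟨h1, h2, ?_⟩
  have hcont : ContinuousOn xi (Set.Icc (-(Real.pi / 2)) (Real.pi / 2)) := by
    intro x hx
    rcases eq_or_lt_of_le hx.2 with hR | hR
    · subst hR
      have hIio : ContinuousWithinAt xi (Set.Iio (Real.pi / 2)) (Real.pi / 2) := by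
        rw [ContinuousWithinAt, xi_pi2]; exact h1
      have := hIio.insert
      refine this.mono fun y hy => ?_
      rcases eq_or_lt_of_le hy.2 with h | h
      · exact Or.inl h
      · exact Or.inr h
    rcases eq_or_lt_of_le hx.1 with hL | hL
    · rw [← hL]
      have hIoi : ContinuousWithinAt xi (Set.Ioi (-(Real.pi / 2))) (-(Real.pi / 2)) := by
        rw [ContinuousWithinAt, xi_neg_pi2]; exact h2
      have := hIoi.insert
      refine this.mono fun y hy => ?_
      rcases eq_or_lt_of_le hy.1 with h | h
      · exact Or.inl h.symm
      · exact Or.inr h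
    · have hc : Real.cos x ≠ 0 :=
        ne_of_gt (Real.cos_pos_of_mem_Ioo ⟨hL, hR⟩)
      have : ContinuousAt xi x := by
        apply ContinuousAt.div
        · fun_prop
        · fun_prop
        · exact pow_ne_zero 2 hc
      exact this.continuousWithinAt
  exact hcont.congr fun θ hθ => hF θ
end

section
/- Let δ be a real number and define z(θ) = 1 + δ·ξ(θ). Then for every θ in (−π/2, π/2), z satisfies the differential equation (cos²θ/2)·z''(θ) − cosθ·sinθ·z'(θ) − z(θ) + 1 = 2δ·cos²θ. -/
open Real Set Filter Topology

noncomputable def xiD (θ : ℝ) : ℝ :=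
  4 * θ + 2 * Real.sin θ *
    (Real.cos θ ^ 2 + 2 * θ * Real.sin θ * Real.cos θ + θ ^ 2 - Real.pi ^ 2 / 4) /
    Real.cos θ ^ 3
noncomputable def xiDD (θ : ℝ) : ℝ :=
  4 + 8 * θ * Real.sin θ / Real.cos θ + 2 * (3 - 2 * Real.cos θ ^ 2) *
    (Real.cos θ ^ 2 + 2 * θ * Real.sin θ * Real.cos θ + θ ^ 2 - Real.pi ^ 2 / 4) /
    Real.cos θ ^ 4

lemma hasDerivAt_u (θ : ℝ) :
    HasDerivAt (fun t => Real.cos t ^ 2 + 2 * t * Real.sin t * Real.cos t + t ^ 2 - Real.pi ^ 2 / 4)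
      (4 * θ * Real.cos θ ^ 2) θ := by
  have h1 : HasDerivAt (fun t : ℝ => Real.cos t ^ 2)
      (2 * Real.cos θ ^ 1 * (-Real.sin θ)) θ := (Real.hasDerivAt_cos θ).pow 2
  have hid : HasDerivAt (fun y : ℝ => y) 1 θ := hasDerivAt_id θ
  have h2 := ((hid.const_mul (2:ℝ)).mul (Real.hasDerivAt_sin θ)).mul (Real.hasDerivAt_cos θ)
  have h := ((h1.add h2).add (hasDerivAt_pow 2 θ)).sub_const (Real.pi ^ 2 / 4)
  refine h.congr_deriv (Eq.symm ?_)
  have hs := Real.sin_sq_add_cos_sq θ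
  simp only [Pi.mul_apply]
  push_cast
  linear_combination (2 * θ) * hs

lemma hasDerivAt_xi {θ : ℝ} (hc : Real.cos θ ≠ 0) : HasDerivAt xi (xiD θ) θ := by
  have hu := hasDerivAt_u θ
  have hv : HasDerivAt (fun t : ℝ => Real.cos t ^ 2)
      (2 * Real.cos θ ^ 1 * (-Real.sin θ)) θ := (Real.hasDerivAt_cos θ).pow 2
  have hc2 : Real.cos θ ^ 2 ≠ 0 := pow_ne_zero _ hc
  have h := hu.div hv hc2
  refine h.congr_deriv (Eq.symm ?_)
  unfold xiD
  field_simp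
  ring

lemma hasDerivAt_xiD {θ : ℝ} (hc : Real.cos θ ≠ 0) : HasDerivAt xiD (xiDD θ) θ := by
  have hu := hasDerivAt_u θ
  have hn := ((Real.hasDerivAt_sin θ).const_mul (2:ℝ)).mul hu
  have hd : HasDerivAt (fun t : ℝ => Real.cos t ^ 3)
      (3 * Real.cos θ ^ 2 * (-Real.sin θ)) θ := (Real.hasDerivAt_cos θ).pow 3
  have hc3 : Real.cos θ ^ 3 ≠ 0 := pow_ne_zero _ hc
  have h4 : HasDerivAt (fun t : ℝ => 4 * t) ((4:ℝ) * 1) θ := (hasDerivAt_id θ).const_mul 4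
  have h := h4.add (hn.div hd hc3)
  have h' : HasDerivAt xiD _ θ := h
  convert h' using 1
  unfold xiDD
  simp only [Pi.mul_apply]
  have hs := Real.sin_sq_add_cos_sq θ
  field_simp
  linear_combination ((-48)*Real.cos θ*θ*Real.sin θ + (-24)*Real.cos θ^2 + (-24)*θ^2 + 6*Real.pi^2) * hs

theorem z_ode (δ : ℝ) :
    ∀ θ ∈ Set.Ioo (-(Real.pi / 2)) (Real.pi / 2),
      Real.cos θ ^ 2 / 2 * deriv (deriv (fun t => 1 + δ * xi t)) θ
        - Real.cos θ * Real.sin θ * deriv (fun t => 1 + δ * xi t) θ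
        - (1 + δ * xi θ) + 1 = 2 * δ * Real.cos θ ^ 2 := by
  intro θ hθ
  have hc : 0 < Real.cos θ := Real.cos_pos_of_mem_Ioo hθ
  have hc0 : Real.cos θ ≠ 0 := ne_of_gt hc
  have h1 : ∀ t : ℝ, Real.cos t ≠ 0 → deriv (fun t => 1 + δ * xi t) t = δ * xiD t := by
    intro t ht
    exact (((hasDerivAt_xi ht).const_mul δ).const_add 1).deriv
  have hev : ∀ᶠ t in 𝓝 θ, Real.cos t ≠ 0 :=
    Real.continuous_cos.continuousAt.eventually_ne hc0
  have hev2 : deriv (fun t => 1 + δ * xi t) =ᶠ[𝓝 θ] fun t => δ * xiD t :=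
    hev.mono h1
  have h2 : deriv (deriv (fun t => 1 + δ * xi t)) θ = δ * xiDD θ := by
    rw [hev2.deriv_eq]
    exact ((hasDerivAt_xiD hc0).const_mul δ).deriv
  rw [h2, h1 θ hc0]
  unfold xi xiD xiDD
  have hs := Real.sin_sq_add_cos_sq θ
  field_simp
  linear_combination ((-32)*Real.cos θ*θ*Real.sin θ*δ + (-16)*Real.cos θ^2*δ + (-16)*θ^2*δ + 4*Real.pi^2*δ) * hs
end

section
/- Let δ be a real number with 0 < δ ≤ 1/2 and define z(θ) = 1 + δ·ξ(θ). Then for every θ in (−π/2, π/2), z(θ) ≥ 3/2 − π²/8, and in particular z(θ) > 0. -/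
open Real Set Filter Topology

set_option maxHeartbeats 1000000


lemma sin_lb {x : ℝ} (hx : 0 ≤ x) : x - x^3/6 ≤ Real.sin x := by
  have hd : ∀ y : ℝ, HasDerivAt (fun y : ℝ => Real.sin y - (y - y^3/6))
      (Real.cos y - (1 - y^2/2)) y := by
    intro y
    have h2 : HasDerivAt (fun y : ℝ => y - y^3/6) (1 - y^2/2) y := by
      have h3 := (hasDerivAt_pow 3 y).div_const 6
      have h4 := (hasDerivAt_id' y).sub h3
      refine h4.congr_deriv ?_
      push_cast
      ring
    exact (Real.hasDerivAt_sin y).sub h2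
  have hmono : MonotoneOn (fun y : ℝ => Real.sin y - (y - y^3/6)) (Set.Ici 0) := by
    apply monotoneOn_of_deriv_nonneg (convex_Ici 0)
    · exact Continuous.continuousOn (by continuity)
    · intro y hy
      exact (hd y).differentiableAt.differentiableWithinAt
    · intro y hy
      rw [(hd y).deriv]
      nlinarith [Real.one_sub_sq_div_two_le_cos (x := y)]
  have := hmono Set.self_mem_Ici (Set.mem_Ici.2 hx) hx
  simpa using this

lemma fkey (θ : ℝ) (h0 : 0 ≤ θ) (h1 : θ ≤ π/2) :
    (π^2/4) * Real.sin θ^2 ≤ θ^2 + 2*θ*Real.sin θ*Real.cos θ := by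
  have hpi1 : (3.1415 : ℝ) < π := by linarith [Real.pi_gt_d6]
  have hpi2 : π < 3.1416 := by linarith [Real.pi_lt_d6]
  rcases le_or_gt θ (9/10) with hcase | hcase
  · -- Taylor at 0
    have hs1 : θ - θ^3/6 ≤ Real.sin θ := sin_lb h0
    have hc1 : 1 - θ^2/2 ≤ Real.cos θ := Real.one_sub_sq_div_two_le_cos
    have hid : Real.sin θ^2 + Real.cos θ^2 = 1 := Real.sin_sq_add_cos_sq θ
    have hq : (0:ℝ) ≤ θ - θ^3/6 := by nlinarith
    have hc0 : (0:ℝ) ≤ 1 - θ^2/2 := by nlinarith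
    have hsnn : 0 ≤ Real.sin θ :=
      Real.sin_nonneg_of_nonneg_of_le_pi h0 (by linarith [Real.pi_pos])
    have h2 : Real.sin θ^2 ≤ θ^2 - θ^4/4 := by nlinarith
    have hmul : (θ - θ^3/6)*(1 - θ^2/2) ≤ Real.sin θ * Real.cos θ :=
      mul_le_mul hs1 hc1 hc0 hsnn
    have h3 : 2*θ*((θ - θ^3/6)*(1 - θ^2/2)) ≤ 2*θ*(Real.sin θ*Real.cos θ) := by
      nlinarith [mul_le_mul_of_nonneg_left hmul (by linarith : (0:ℝ) ≤ 2*θ)]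
    have h81 : θ^2 ≤ 81/100 := by nlinarith
    have hinner : 0 ≤ 3 - π^2/4 - (4/3 - π^2/16)*θ^2 + θ^4/6 := by
      nlinarith [sq_nonneg θ, sq_nonneg (θ^2 - 81/100), h81,
        mul_nonneg (sub_nonneg.2 h81) (sq_nonneg θ)]
    have hginner := mul_nonneg (sq_nonneg θ) hinner
    have h4 : (π^2/4) * Real.sin θ^2 ≤ (π^2/4)*(θ^2 - θ^4/4) :=
      mul_le_mul_of_nonneg_left h2 (by positivity)
    linarith [hginner, h3, h4]
  · -- Taylor at π/2 : ε = π/2 - θ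
    have hε0 : 0 ≤ π/2 - θ := by linarith
    have hεhi : π/2 - θ ≤ 6708/10000 := by linarith
    set ε := π/2 - θ with hε
    have hθ : θ = π/2 - ε := by rw [hε]; ring
    clear_value ε
    have hsθ : Real.sin θ = Real.cos ε := by rw [hθ, Real.sin_pi_div_two_sub]
    have hcθ : Real.cos θ = Real.sin ε := by rw [hθ, Real.cos_pi_div_two_sub]
    have hs1 : ε - ε^3/6 ≤ Real.sin ε := sin_lb hε0
    have hc1 : 1 - ε^2/2 ≤ Real.cos ε := Real.one_sub_sq_div_two_le_cos
    have hid : Real.sin ε^2 + Real.cos ε^2 = 1 := Real.sin_sq_add_cos_sq ε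
    have hq : (0:ℝ) ≤ ε - ε^3/6 := by nlinarith
    have hc0 : (0:ℝ) ≤ 1 - ε^2/2 := by nlinarith
    have hsnn : 0 ≤ Real.sin ε :=
      Real.sin_nonneg_of_nonneg_of_le_pi hε0 (by linarith)
    have h2 : Real.cos ε^2 ≤ 1 - (ε - ε^3/6)^2 := by nlinarith
    have hmul : (1 - ε^2/2)*(ε - ε^3/6) ≤ Real.cos ε * Real.sin ε :=
      mul_le_mul hc1 hs1 hq (le_trans hc0 hc1)
    have hθnn : (0:ℝ) ≤ π/2 - ε := by rw [← hθ]; exact h0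
    have h3 : 2*(π/2-ε)*((1 - ε^2/2)*(ε - ε^3/6)) ≤ 2*(π/2-ε)*(Real.cos ε*Real.sin ε) := by
      nlinarith [mul_le_mul_of_nonneg_left hmul (by linarith : (0:ℝ) ≤ 2*(π/2-ε))]
    have he2 : ε^2 ≤ 45/100 := by nlinarith [mul_le_mul hεhi hεhi hε0 (by norm_num : (0:ℝ) ≤ 6708/10000)]
    have he4 : ε^4 ≤ 2025/10000 := by nlinarith [mul_le_mul he2 he2 (sq_nonneg ε) (by norm_num : (0:ℝ) ≤ 45/100)]
    have hpe : π*ε ≤ 2108/1000 := by nlinarith [mul_le_mul hpi2.le hεhi hε0 (by norm_num : (0:ℝ) ≤ 3.1416)]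
    have hg : 0 ≤ (π^2/4 - 1) - (2*π/3)*ε + (4/3 - π^2/12)*ε^2 + (π/12)*ε^3 + (π^2/144 - 1/6)*ε^4 := by
      nlinarith [he4, hpe, sq_nonneg ε, mul_nonneg (mul_nonneg hε0 hε0) hε0,
        mul_nonneg (mul_nonneg (mul_nonneg hε0 hε0) hε0) (le_of_lt (lt_trans (by norm_num) hpi1)),
        mul_nonneg (sq_nonneg ε) (by nlinarith : (0:ℝ) ≤ 4/3 - π^2/12)]
    have hgmul := mul_nonneg (sq_nonneg ε) hg
    have h4 : (π^2/4) * Real.cos ε^2 ≤ (π^2/4)*(1 - (ε - ε^3/6)^2) :=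
      mul_le_mul_of_nonneg_left h2 (by positivity)
    rw [hsθ, hcθ, hθ]
    linarith [hgmul, h3, h4]

theorem z_lower_bound (δ : ℝ) (hδ0 : 0 < δ) (hδ1 : δ ≤ 1 / 2) :
    ∀ θ ∈ Set.Ioo (-(Real.pi / 2)) (Real.pi / 2),
      3 / 2 - Real.pi ^ 2 / 8 ≤ 1 + δ * xi θ ∧ 0 < 1 + δ * xi θ := by
  intro θ hθ
  obtain ⟨hθ1, hθ2⟩ := hθ
  have hc : 0 < Real.cos θ := Real.cos_pos_of_mem_Ioo ⟨hθ1, hθ2⟩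
  have hc2 : 0 < Real.cos θ ^ 2 := by positivity
  have hpi2 : π < 3.1416 := by linarith [Real.pi_lt_d6]
  -- key: xi θ ≥ 1 - π²/4
  have hf : (π^2/4) * Real.sin θ^2 ≤ θ^2 + 2*θ*Real.sin θ*Real.cos θ := by
    rcases le_or_gt 0 θ with h | h
    · exact fkey θ h hθ2.le
    · have := fkey (-θ) (by linarith) (by linarith)
      simpa [Real.sin_neg, Real.cos_neg, neg_mul, mul_neg] using this
  have hxi : 1 - π^2/4 ≤ xi θ := by
    rw [xi, le_div_iff₀ hc2]
    have hid : Real.sin θ^2 + Real.cos θ^2 = 1 := Real.sin_sq_add_cos_sq θ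
    nlinarith [hf]
  constructor
  · rcases le_or_gt 0 (xi θ) with hx | hx
    · have : 0 ≤ δ * xi θ := mul_nonneg hδ0.le hx
      nlinarith [Real.pi_gt_three]
    · have h1 : xi θ / 2 ≤ δ * xi θ := by nlinarith
      nlinarith [hxi]
  · rcases le_or_gt 0 (xi θ) with hx | hx
    · have : 0 ≤ δ * xi θ := mul_nonneg hδ0.le hx
      linarith
    · have h1 : xi θ / 2 ≤ δ * xi θ := by nlinarith
      nlinarith [hxi]
end

section
/- Let δ be a nonnegative real number and define z(θ) = 1 + δ·ξ(θ). Then for every θ in (−π/2, π/2), z'(θ)·sinθ ≥ 0. -/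
open Real Set Filter Topology

lemma hAux_deriv (x : ℝ) (hs : Real.sin x ≠ 0) :
    HasDerivAt (fun t => t^2 + 2*t*Real.cos t/Real.sin t + Real.cos t^2)
      (2*x + ((2*Real.cos x + 2*x*(-Real.sin x))*Real.sin x - (2*x*Real.cos x)*Real.cos x)/Real.sin x^2
        + 2*Real.cos x*(-Real.sin x)) x := by
  have h1 : HasDerivAt (fun t : ℝ => t^2) (2*x) x := by simpa using hasDerivAt_pow 2 x
  have h2 : HasDerivAt (fun t : ℝ => 2*t*Real.cos t) (2*Real.cos x + 2*x*(-Real.sin x)) x := by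
    have := ((hasDerivAt_id x).const_mul 2).mul (Real.hasDerivAt_cos x)
    simp only [id_eq] at this
    exact this.congr_deriv (by ring)
  have h3 := (h2.div (Real.hasDerivAt_sin x) hs)
  have h4 : HasDerivAt (fun t : ℝ => Real.cos t^2) (2*Real.cos x*(-Real.sin x)) x := by
    have := (Real.hasDerivAt_cos x).pow 2
    exact this.congr_deriv (by norm_num)
  exact (h1.add h3).add h4

-- key inequality
lemma key (θ : ℝ) (h1 : 0 < θ) (h2 : θ < Real.pi/2) :
    Real.pi^2/4 * Real.sin θ^2 ≤
      θ^2*Real.sin θ^2 + 2*θ*Real.cos θ*Real.sin θ + Real.cos θ^2*Real.sin θ^2 := by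
  set h : ℝ → ℝ := fun t => t^2 + 2*t*Real.cos t/Real.sin t + Real.cos t^2 with hh
  have hsinpos : ∀ x ∈ Icc θ (Real.pi/2), 0 < Real.sin x := by
    intro x hx
    exact Real.sin_pos_of_pos_of_lt_pi (lt_of_lt_of_le h1 hx.1)
      (lt_of_le_of_lt hx.2 (by linarith [Real.pi_pos]))
  have anti : AntitoneOn h (Icc θ (Real.pi/2)) := by
    have hcont : ContinuousOn h (Icc θ (Real.pi/2)) := by
      apply ContinuousOn.add
      apply ContinuousOn.add
      · exact (continuous_pow 2).continuousOn
      · exact ((continuous_const.mul continuous_id).mul Real.continuous_cos).continuousOn.div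
          Real.continuous_sin.continuousOn (fun x hx => (hsinpos x hx).ne')
      · exact (Real.continuous_cos.pow 2).continuousOn
    apply antitoneOn_of_deriv_nonpos (convex_Icc _ _) hcont
    · intro x hx
      rw [interior_Icc] at hx
      exact (hAux_deriv x (hsinpos x ⟨hx.1.le, hx.2.le⟩).ne').differentiableAt.differentiableWithinAt
    · intro x hx
      rw [interior_Icc] at hx
      obtain ⟨hx1, hx2⟩ := hx
      have hsp : 0 < Real.sin x := hsinpos x ⟨hx1.le, hx2.le⟩
      have hcp : 0 < Real.cos x := Real.cos_pos_of_mem_Ioo ⟨by linarith [Real.pi_pos], hx2⟩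
      rw [(hAux_deriv x hsp.ne').deriv]
      have pyth := Real.sin_sq_add_cos_sq x
      have hsx : Real.sin x < x := Real.sin_lt (by linarith)
      have hVeq : (2*x + ((2*Real.cos x + 2*x*(-Real.sin x))*Real.sin x - (2*x*Real.cos x)*Real.cos x)/Real.sin x^2
        + 2*Real.cos x*(-Real.sin x)) = 2*Real.cos x^2*(Real.sin x*Real.cos x - x)/Real.sin x^2 := by
        field_simp
        linear_combination (-(Real.sin x*Real.cos x)) * pyth
      rw [hVeq]
      apply div_nonpos_of_nonpos_of_nonneg _ (sq_nonneg _)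
      exact mul_nonpos_of_nonneg_of_nonpos (by positivity)
        (by nlinarith [Real.cos_le_one x])
  have hmem1 : θ ∈ Icc θ (Real.pi/2) := ⟨le_refl _, h2.le⟩
  have hmem2 : Real.pi/2 ∈ Icc θ (Real.pi/2) := ⟨h2.le, le_refl _⟩
  have hA := anti hmem1 hmem2 h2.le
  have hval : h (Real.pi/2) = Real.pi^2/4 := by
    simp [hh, Real.cos_pi_div_two, Real.sin_pi_div_two]
    ring
  rw [hval] at hA
  -- hA : π²/4 ≤ h θ
  have hsθ : 0 < Real.sin θ := hsinpos θ hmem1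
  have hexp : h θ * Real.sin θ^2 = θ^2*Real.sin θ^2 + 2*θ*Real.cos θ*Real.sin θ + Real.cos θ^2*Real.sin θ^2 := by
    simp only [hh]
    field_simp
  calc Real.pi^2/4 * Real.sin θ^2 ≤ h θ * Real.sin θ^2 :=
        mul_le_mul_of_nonneg_right hA (sq_nonneg _)
    _ = _ := hexp


lemma key2 (θ : ℝ) (h1 : -(Real.pi/2) < θ) (h2 : θ < Real.pi/2) :
    Real.pi^2/4 * Real.sin θ^2 ≤
      θ^2*Real.sin θ^2 + 2*θ*Real.cos θ*Real.sin θ + Real.cos θ^2*Real.sin θ^2 := by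
  rcases lt_trichotomy θ 0 with hlt | heq | hgt
  · have := key (-θ) (by linarith) (by linarith)
    rw [Real.sin_neg, Real.cos_neg] at this
    nlinarith [this]
  · subst heq; simp
  · exact key θ hgt h2

theorem z_deriv_mul_sin_nonneg (δ : ℝ) (hδ : 0 ≤ δ) :
    ∀ θ ∈ Set.Ioo (-(Real.pi / 2)) (Real.pi / 2),
      0 ≤ deriv (fun t => 1 + δ * xi t) θ * Real.sin θ := by
  intro θ hθ
  obtain ⟨hθ1, hθ2⟩ := hθ
  have hc : 0 < Real.cos θ := Real.cos_pos_of_mem_Ioo ⟨hθ1, hθ2⟩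
  have hcne : Real.cos θ ^ 2 ≠ 0 := by positivity
  set s := Real.sin θ
  set c := Real.cos θ
  -- derivative of numerator
  have hN : HasDerivAt (fun t => Real.cos t^2 + 2*t*Real.sin t*Real.cos t + t^2 - Real.pi^2/4)
      (2*c*(-s) + ((2*s + 2*θ*c)*c + (2*θ*s)*(-s)) + 2*θ) θ := by
    have a1 : HasDerivAt (fun t : ℝ => Real.cos t^2) (2*c*(-s)) θ := by
      have := (Real.hasDerivAt_cos θ).pow 2
      exact this.congr_deriv (by norm_num [s, c])
    have a2 : HasDerivAt (fun t : ℝ => 2*t*Real.sin t*Real.cos t)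
        ((2*s + 2*θ*c)*c + (2*θ*s)*(-s)) θ := by
      have := (((hasDerivAt_id θ).const_mul 2).mul (Real.hasDerivAt_sin θ)).mul
        (Real.hasDerivAt_cos θ)
      simp only [id_eq] at this
      exact this.congr_deriv (by simp only [Pi.mul_apply, s, c]; ring)
    have a3 : HasDerivAt (fun t : ℝ => t^2) (2*θ) θ := by simpa using hasDerivAt_pow 2 θ
    exact ((a1.add a2).add a3).sub_const _
  have hden : HasDerivAt (fun t : ℝ => Real.cos t^2) (2*c*(-s)) θ := by
    have := (Real.hasDerivAt_cos θ).pow 2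
    exact this.congr_deriv (by norm_num [s, c])
  have hxi : HasDerivAt xi
      (((2*c*(-s) + ((2*s + 2*θ*c)*c + (2*θ*s)*(-s)) + 2*θ) * c^2 -
        (c^2 + 2*θ*s*c + θ^2 - Real.pi^2/4) * (2*c*(-s))) / (c^2)^2) θ := by
    unfold xi
    exact hN.div hden hcne
  have hz : HasDerivAt (fun t => 1 + δ * xi t) (δ *
      (((2*c*(-s) + ((2*s + 2*θ*c)*c + (2*θ*s)*(-s)) + 2*θ) * c^2 -
        (c^2 + 2*θ*s*c + θ^2 - Real.pi^2/4) * (2*c*(-s))) / (c^2)^2)) θ :=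
    (hxi.const_mul δ).const_add 1
  rw [hz.deriv, mul_assoc]
  apply mul_nonneg hδ
  -- reduce to polynomial inequality
  have pyth : s^2 + c^2 = 1 := Real.sin_sq_add_cos_sq θ
  have hkey := key2 θ hθ1 hθ2
  have heq : (((2*c*(-s) + ((2*s + 2*θ*c)*c + (2*θ*s)*(-s)) + 2*θ) * c^2 -
        (c^2 + 2*θ*s*c + θ^2 - Real.pi^2/4) * (2*c*(-s))) / (c^2)^2) * s =
      (s * ((2*c*(-s) + ((2*s + 2*θ*c)*c + (2*θ*s)*(-s)) + 2*θ) * c^2 +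
        (c^2 + 2*θ*s*c + θ^2 - Real.pi^2/4) * (2*c*s))) / (c^2)^2 := by
    field_simp
    ring
  rw [heq]
  apply div_nonneg _ (by positivity)
  have hfr : s * ((2*c*(-s) + ((2*s + 2*θ*c)*c + (2*θ*s)*(-s)) + 2*θ) * c^2 +
        (c^2 + 2*θ*s*c + θ^2 - Real.pi^2/4) * (2*c*s)) =
      c * (2*(θ^2*s^2 + 2*θ*c*s + c^2*s^2) - 2*(Real.pi^2/4*s^2)) := by
    linear_combination (2*θ*s*c^2) * pyth
  rw [hfr]
  apply mul_nonneg hc.le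
  linarith
end

section
/- For every real number δ, ∫₀^{π/2} (1 + δ·ξ(θ)) dθ = (π/2)·(1 − δ). -/
open Real Set Filter Topology

-- key cubic bound
lemma key_u {x : ℝ} (hx : 0 ≤ x) : x - Real.sin x * Real.cos x ≤ 2/3 * x^3 := by
  have hmono : Monotone (fun x : ℝ => 2/3 * x^3 - x + Real.sin x * Real.cos x) := by
    have hd : ∀ y : ℝ, HasDerivAt (fun x : ℝ => 2/3 * x^3 - x + Real.sin x * Real.cos x)
        (2*y^2 - 2*Real.sin y^2) y := by
      intro y
      have h1 : HasDerivAt (fun x : ℝ => 2/3 * x^3 - x) (2/3 * (3*y^2) - 1) y := by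
        exact (((hasDerivAt_pow 3 y).const_mul (2/3 : ℝ)).sub (hasDerivAt_id' y)).congr_deriv (by norm_num)
      have h2 : HasDerivAt (fun x : ℝ => Real.sin x * Real.cos x)
          (Real.cos y * Real.cos y + Real.sin y * (-Real.sin y)) y :=
        (Real.hasDerivAt_sin y).mul (Real.hasDerivAt_cos y)
      have := h1.add h2
      have hy := Real.sin_sq_add_cos_sq y
      refine this.congr_deriv ?_
      nlinarith [Real.sin_sq_add_cos_sq y]
    apply monotone_of_deriv_nonneg
    · exact fun y => ((hd y).differentiableAt)
    · intro y
      rw [(hd y).deriv]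
      nlinarith [Real.sin_sq_le_sq (x := y)]
  have h0 := hmono hx
  simp at h0
  linarith

set_option maxHeartbeats 1000000 in
lemma xi_bound_s12 {θ : ℝ} (h0 : 0 ≤ θ) (h1 : θ < Real.pi / 2) :
    |xi θ| ≤ Real.pi ^ 4 / 8 + 1 := by
  obtain ⟨x, hxdef⟩ : ∃ x, x = Real.pi / 2 - θ := ⟨_, rfl⟩
  have hx0 : 0 < x := by rw [hxdef]; linarith
  have hxpi : x ≤ Real.pi / 2 := by rw [hxdef]; linarith
  have hsinx : Real.sin x = Real.cos θ := by rw [hxdef, Real.sin_pi_div_two_sub]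
  have hcosx : Real.cos x = Real.sin θ := by rw [hxdef, Real.cos_pi_div_two_sub]
  have hcpos : 0 < Real.cos θ := Real.cos_pos_of_mem_Ioo ⟨by linarith [Real.pi_pos], h1⟩
  have hsnn : 0 ≤ Real.sin θ := Real.sin_nonneg_of_nonneg_of_le_pi h0 (by linarith [Real.pi_pos])
  have hjordan : 2 / Real.pi * x ≤ Real.cos θ := by
    rw [← hsinx]; exact Real.mul_le_sin hx0.le hxpi
  obtain ⟨u, hudef⟩ : ∃ u, u = x - Real.cos θ * Real.sin θ := ⟨_, rfl⟩
  have hu3 : u ≤ 2/3 * x^3 := by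
    have := key_u hx0.le
    rw [hsinx, hcosx] at this
    linarith [hudef.le]
  have hu0 : 0 ≤ u := by
    have hs := Real.sin_le hx0.le
    rw [hsinx] at hs
    nlinarith [Real.sin_le_one θ, hcpos.le]
  have hux : u ≤ x := by nlinarith [hcpos.le]
  have hN : Real.cos θ ^ 2 + 2 * θ * Real.sin θ * Real.cos θ + θ ^ 2 - Real.pi ^ 2 / 4
      = -Real.pi * u + u^2 + Real.cos θ^4 := by
    rw [hudef, hxdef]
    linear_combination (-(Real.cos θ^2)) * (Real.sin_sq_add_cos_sq θ)
  have h2x : 2 * x ≤ Real.pi * Real.cos θ := by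
    rw [div_mul_eq_mul_div, div_le_iff₀ (Real.pi_pos)] at hjordan
    linarith
  have hx2 : x^2 ≤ Real.pi^2/4 * Real.cos θ^2 := by
    nlinarith [mul_le_mul h2x h2x (by positivity) (by positivity : (0:ℝ) ≤ Real.pi * Real.cos θ)]
  have hbound : |Real.cos θ ^ 2 + 2 * θ * Real.sin θ * Real.cos θ + θ ^ 2 - Real.pi ^ 2 / 4|
      ≤ (Real.pi ^ 4 / 8 + 1) * Real.cos θ ^ 2 := by
    rw [hN, abs_le]
    have hpi : (0:ℝ) < Real.pi := Real.pi_pos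
    have hc1 : Real.cos θ ≤ 1 := Real.cos_le_one θ
    have hc4 : Real.cos θ^4 ≤ Real.cos θ^2 := by nlinarith [sq_nonneg (Real.cos θ)]
    have hpu : Real.pi * u ≤ Real.pi ^ 4 / 8 * Real.cos θ ^ 2 := by
      have t1 : Real.pi * u ≤ Real.pi * (2/3 * x^3) := mul_le_mul_of_nonneg_left hu3 hpi.le
      have t2 : Real.pi * (x * x^2) ≤ Real.pi * (Real.pi/2 * x^2) :=
        mul_le_mul_of_nonneg_left (mul_le_mul_of_nonneg_right hxpi (sq_nonneg x)) hpi.le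
      have t3 : Real.pi^2/2 * x^2 ≤ Real.pi^2/2 * (Real.pi^2/4 * Real.cos θ^2) :=
        mul_le_mul_of_nonneg_left hx2 (by positivity)
      nlinarith [t1, t2, t3]
    have hu2 : u^2 ≤ Real.pi^2/4 * Real.cos θ^2 := by
      have t1 : u*u ≤ u*x := mul_le_mul_of_nonneg_left hux hu0
      have t2 : u*x ≤ x*x := mul_le_mul_of_nonneg_right hux hx0.le
      nlinarith [t1, t2]
    have hpp : Real.pi^2/4 * Real.cos θ^2 ≤ Real.pi^4/8 * Real.cos θ^2 := by
      have h9 : 9 ≤ Real.pi^2 := by nlinarith [Real.pi_gt_three]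
      have h94 : 9 * Real.pi^2 ≤ Real.pi^2 * Real.pi^2 :=
        mul_le_mul_of_nonneg_right h9 (sq_nonneg _)
      have : Real.pi^2/4 ≤ Real.pi^4/8 := by nlinarith [sq_nonneg Real.pi]
      exact mul_le_mul_of_nonneg_right this (sq_nonneg _)
    constructor
    · linarith [hpu, sq_nonneg u, pow_nonneg hcpos.le 4, sq_nonneg (Real.cos θ)]
    · linarith [hu2, hc4, hpp, mul_nonneg hpi.le hu0]
  rw [xi, abs_div, abs_of_pos (by positivity : (0:ℝ) < Real.cos θ^2),
    div_le_iff₀ (by positivity : (0:ℝ) < Real.cos θ^2)]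
  exact hbound

theorem z_integral_half (δ : ℝ) :
    ∫ θ in (0 : ℝ)..(Real.pi / 2), (1 + δ * xi θ) = Real.pi / 2 * (1 - δ) := by
  have hpi : (0:ℝ) < Real.pi := Real.pi_pos
  have hab : (0:ℝ) < Real.pi / 2 := by linarith
  -- antiderivative
  set f : ℝ → ℝ := fun θ => (1 + δ) * θ + δ * ((θ^2 - Real.pi^2/4) * Real.tan θ) with hf
  have hderiv : ∀ θ ∈ Ioo (0:ℝ) (Real.pi/2), HasDerivAt f (1 + δ * xi θ) θ := by
    intro θ hθ
    have hc : 0 < Real.cos θ := Real.cos_pos_of_mem_Ioo ⟨by linarith [hθ.1], hθ.2⟩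
    have h1 : HasDerivAt (fun θ : ℝ => (1 + δ) * θ) (1 + δ) θ := by
      simpa using (hasDerivAt_id θ).const_mul (1 + δ)
    have h2 : HasDerivAt (fun θ : ℝ => θ^2 - Real.pi^2/4) (2 * θ) θ := by
      simpa using (hasDerivAt_pow 2 θ).sub_const (Real.pi^2/4)
    have h3 : HasDerivAt Real.tan (1 / Real.cos θ ^ 2) θ := Real.hasDerivAt_tan hc.ne'
    have h4 := (h2.mul h3).const_mul δ
    have h5 := h1.add h4
    refine h5.congr_deriv ?_
    rw [xi, Real.tan_eq_sin_div_cos]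
    field_simp
    ring
  have hint : IntervalIntegrable (fun θ => 1 + δ * xi θ) MeasureTheory.volume 0 (Real.pi/2) := by
    rw [intervalIntegrable_iff_integrableOn_Ioc_of_le hab.le]
    apply MeasureTheory.Integrable.mono' (MeasureTheory.integrable_const (1 + |δ| * (Real.pi^4/8 + 1)))
    · apply Measurable.aestronglyMeasurable
      apply Measurable.add measurable_const
      apply Measurable.mul measurable_const
      unfold xi
      exact (by fun_prop : Measurable fun θ : ℝ => Real.cos θ ^ 2 + 2 * θ * Real.sin θ * Real.cos θ + θ ^ 2 - Real.pi ^ 2 / 4).div (by fun_prop)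
    · filter_upwards [MeasureTheory.ae_restrict_mem measurableSet_Ioc] with θ hθ
      have hxb : |xi θ| ≤ Real.pi^4/8 + 1 := by
        rcases lt_or_eq_of_le hθ.2 with h | h
        · exact xi_bound_s12 hθ.1.le h
        · rw [h, xi, Real.cos_pi_div_two]
          norm_num
          positivity
      calc |1 + δ * xi θ| ≤ |1| + |δ * xi θ| := abs_add_le _ _
        _ ≤ 1 + |δ| * (Real.pi^4/8 + 1) := by
            rw [abs_one, abs_mul]
            have := mul_le_mul_of_nonneg_left hxb (abs_nonneg δ)
            linarith
  -- limits at the endpoints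
  have hlim0 : Tendsto f (𝓝[>] (0:ℝ)) (𝓝 0) := by
    have hc : ContinuousAt f 0 := by
      have : ContinuousAt Real.tan 0 := Real.continuousAt_tan.2 (by simp)
      fun_prop (disch := assumption)
    have h0 : f 0 = 0 := by simp [hf]
    have ht : Tendsto f (𝓝[>] (0:ℝ)) (𝓝 (f 0)) := hc.continuousWithinAt.tendsto
    rwa [h0] at ht
  have hlimb : Tendsto f (𝓝[<] (Real.pi/2)) (𝓝 (Real.pi/2 * (1-δ))) := by
    have hfeq : ∀ θ : ℝ, f θ = (1 + δ) * θ +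
        δ * (((θ - Real.pi/2) / Real.cos θ) * ((θ + Real.pi/2) * Real.sin θ)) := by
      intro θ
      simp only [hf, Real.tan_eq_sin_div_cos, div_eq_mul_inv]
      ring
    have hslope : Tendsto (fun θ => (θ - Real.pi/2) / Real.cos θ) (𝓝[≠] (Real.pi/2)) (𝓝 (-1)) := by
      have hcd := Real.hasDerivAt_cos (Real.pi/2)
      rw [hasDerivAt_iff_tendsto_slope] at hcd
      have hinv := hcd.inv₀ (by simp : (-Real.sin (Real.pi/2)) ≠ 0)
      have hkey : ∀ θ : ℝ, (slope Real.cos (Real.pi/2) θ)⁻¹ = (θ - Real.pi/2) / Real.cos θ := by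
        intro θ
        rw [slope_def_field, Real.cos_pi_div_two, sub_zero, inv_div]
      have h1 : ((-Real.sin (Real.pi/2))⁻¹ : ℝ) = -1 := by rw [Real.sin_pi_div_two]; norm_num
      rw [h1] at hinv
      exact hinv.congr hkey
    have hslope' : Tendsto (fun θ => (θ - Real.pi/2) / Real.cos θ) (𝓝[<] (Real.pi/2)) (𝓝 (-1)) :=
      hslope.mono_left (nhdsWithin_mono _ fun y hy => ne_of_lt hy)
    have h3 : Tendsto (fun θ : ℝ => (θ + Real.pi/2) * Real.sin θ) (𝓝[<] (Real.pi/2))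
        (𝓝 ((Real.pi/2 + Real.pi/2) * Real.sin (Real.pi/2))) :=
      (((continuous_id.add continuous_const).mul Real.continuous_sin).continuousAt).tendsto.mono_left
        nhdsWithin_le_nhds
    have h2 : Tendsto (fun θ : ℝ => (1 + δ) * θ) (𝓝[<] (Real.pi/2)) (𝓝 ((1 + δ) * (Real.pi/2))) :=
      ((continuous_const.mul continuous_id).continuousAt).tendsto.mono_left nhdsWithin_le_nhds
    have htot := h2.add ((hslope'.mul h3).const_mul δ)
    have hval : (1 + δ) * (Real.pi/2) + δ * (-1 * ((Real.pi/2 + Real.pi/2) * Real.sin (Real.pi/2)))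
        = Real.pi/2 * (1 - δ) := by
      rw [Real.sin_pi_div_two]; ring
    rw [hval] at htot
    exact htot.congr fun θ => (hfeq θ).symm
  have := intervalIntegral.integral_eq_sub_of_hasDerivAt_of_tendsto hab hderiv hint hlim0 hlimb
  rw [this]
  ring
end

section
/- Let δ be a real number with δ > 0 and define z(θ) = 1 + δ·ξ(θ). Then z is strictly monotone decreasing on (−π/2, 0) and strictly monotone increasing on (0, π/2); in particular z attains its minimum value 1 + δ·(1 − π²/4) on (−π/2, π/2) exactly at θ = 0. -/
open Real Set Filter Topology

lemma sin_ge_sub_cube' {x : ℝ} (hx : 0 ≤ x) : x - x ^ 3 / 6 ≤ Real.sin x := by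
  have hd : ∀ y : ℝ, HasDerivAt (fun x => Real.sin x - (x - x ^ 3 / 6))
      (Real.cos y - (1 - 3 * y ^ 2 / 6)) y := by
    intro y
    exact (Real.hasDerivAt_sin y).sub
      ((hasDerivAt_id' y).sub (((hasDerivAt_pow 3 y).div_const 6)))
      |>.congr_deriv (by ring)
  have hmono : MonotoneOn (fun x => Real.sin x - (x - x ^ 3 / 6)) (Set.Ici 0) := by
    apply monotoneOn_of_deriv_nonneg (convex_Ici 0)
    · fun_prop
    · intro y _; exact (hd y).differentiableAt.differentiableWithinAt
    · intro y hy
      rw [(hd y).deriv]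
      nlinarith [Real.one_sub_sq_div_two_le_cos (x := y)]
  have := hmono (Set.self_mem_Ici) (Set.mem_Ici.2 hx) hx
  simp only [Real.sin_zero] at this
  linarith

lemma sin_ge_tan_cubic {x : ℝ} (h0 : 0 ≤ x) (h2 : x < Real.pi / 2) :
    (x + x ^ 3 / 3) * Real.cos x ≤ Real.sin x := by
  have hd : ∀ y : ℝ, HasDerivAt (fun x => Real.sin x - (x + x ^ 3 / 3) * Real.cos x)
      (Real.cos y - ((1 + 3 * y ^ 2 / 3) * Real.cos y + (y + y ^ 3 / 3) * (-Real.sin y))) y := by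
    intro y
    exact (Real.hasDerivAt_sin y).sub
      ((((hasDerivAt_id' y).fun_add ((hasDerivAt_pow 3 y).div_const 3)).fun_mul (Real.hasDerivAt_cos y)))
      |>.congr_deriv (by ring)
  have hmono : MonotoneOn (fun x => Real.sin x - (x + x ^ 3 / 3) * Real.cos x)
      (Set.Ico 0 (Real.pi / 2)) := by
    apply monotoneOn_of_deriv_nonneg (convex_Ico 0 (Real.pi / 2))
    · fun_prop
    · intro y hy; exact (hd y).differentiableAt.differentiableWithinAt
    · intro y hy
      rw [interior_Ico] at hy
      obtain ⟨hy0, hy2⟩ := hy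
      rw [(hd y).deriv]
      have hc : 0 < Real.cos y := Real.cos_pos_of_mem_Ioo ⟨by linarith [Real.pi_pos], hy2⟩
      have ht : y * Real.cos y ≤ Real.sin y := by
        have := Real.lt_tan hy0 hy2
        rw [Real.tan_eq_sin_div_cos] at this
        calc y * Real.cos y ≤ (Real.sin y / Real.cos y) * Real.cos y := by
              apply mul_le_mul_of_nonneg_right this.le hc.le
          _ = Real.sin y := by field_simp
      nlinarith [mul_pos (pow_pos hy0 3) hc, mul_le_mul_of_nonneg_left ht (by positivity : (0:ℝ) ≤ y^2)]
  have := hmono ⟨le_refl 0, by linarith [Real.pi_pos]⟩ ⟨h0, h2⟩ h0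
  simp only [Real.sin_zero, Real.cos_zero] at this
  nlinarith [this]

lemma hkey_large {u : ℝ} (h0 : 0 < u) (h1 : u ≤ 0.9) :
    0 < 2 * (Real.pi / 2 - u) * Real.sin u
      + Real.cos u * (Real.sin u ^ 2 + (Real.pi / 2 - u) ^ 2 - Real.pi ^ 2 / 4) := by
  have hpi1 : Real.pi < 3.1416 := by linarith [Real.pi_lt_d6]
  have hpi2 : 3.1415 < Real.pi := by linarith [Real.pi_gt_d6]
  have hu2 : u < Real.pi / 2 := by linarith
  have hA := sin_ge_tan_cubic h0.le hu2
  have hB := sin_ge_sub_cube' h0.le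
  have hcu : 0 < Real.cos u := Real.cos_pos_of_mem_Ioo ⟨by linarith, hu2⟩
  have hB0 : 0 ≤ u - u ^ 3 / 6 := by nlinarith [mul_le_mul_of_nonneg_left h1 h0.le]
  have hsq : (u - u ^ 3 / 6) * (u - u ^ 3 / 6) ≤ Real.sin u * Real.sin u :=
    mul_le_mul hB hB hB0 (hB0.trans hB)
  have hπ2u : 0 < Real.pi - 2 * u := by linarith
  have hπ3u : 0 < Real.pi - 3 * u := by linarith
  have step1 : (Real.pi - 2 * u) * ((u + u ^ 3 / 3) * Real.cos u)
      ≤ (Real.pi - 2 * u) * Real.sin u := mul_le_mul_of_nonneg_left hA hπ2u.le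
  have hcore : 0 < Real.sin u ^ 2 - u ^ 2 + (Real.pi - 2 * u) * u ^ 3 / 3 := by
    nlinarith [hsq, mul_pos (pow_pos h0 3) hπ3u, pow_pos h0 6]
  nlinarith [mul_pos hcu hcore, step1]

/-- Key positivity: h(θ) = 2θcosθ + sinθ(cos²θ + θ² − π²/4) > 0 on (0, π/2). -/
lemma hkey {θ : ℝ} (h0 : 0 < θ) (h2 : θ < Real.pi / 2) :
    0 < 2 * θ * Real.cos θ + Real.sin θ * (Real.cos θ ^ 2 + θ ^ 2 - Real.pi ^ 2 / 4) := by
  have hpi1 : Real.pi < 3.1416 := by linarith [Real.pi_lt_d6]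
  have hpi2 : 3.1415 < Real.pi := by linarith [Real.pi_gt_d6]
  rcases le_or_gt θ 0.7 with hsm | hlg
  · -- small θ: use sin θ ≤ θ and cos θ ≥ 1 - θ²/2
    have hs1 : Real.sin θ ≤ θ := (Real.sin_lt h0).le
    have hs0 : 0 < Real.sin θ := Real.sin_pos_of_pos_of_lt_pi h0 (by linarith)
    have hc1 : 1 - θ ^ 2 / 2 ≤ Real.cos θ := Real.one_sub_sq_div_two_le_cos
    have hc2 : Real.cos θ ≤ 1 := Real.cos_le_one θ
    have hcpos : 0 < Real.cos θ := Real.cos_pos_of_mem_Ioo ⟨by linarith, h2⟩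
    have hX : Real.cos θ ^ 2 + θ ^ 2 - Real.pi ^ 2 / 4 ≤ 0 := by nlinarith
    have hmon : θ * (Real.cos θ ^ 2 + θ ^ 2 - Real.pi ^ 2 / 4)
        ≤ Real.sin θ * (Real.cos θ ^ 2 + θ ^ 2 - Real.pi ^ 2 / 4) := by
      nlinarith [mul_nonneg (sub_nonneg.2 hs1) (neg_nonneg.2 hX)]
    have hfin : 0 < 2 * Real.cos θ + Real.cos θ ^ 2 + θ ^ 2 - Real.pi ^ 2 / 4 := by
      nlinarith [mul_nonneg (sub_nonneg.2 hc1) (by nlinarith : (0:ℝ) ≤ Real.cos θ + (1 - θ ^ 2 / 2)), sq_nonneg (θ ^ 2)]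
    nlinarith [mul_pos h0 hfin, hmon]
  · -- large θ: substitute u = π/2 - θ
    have key := hkey_large (u := Real.pi / 2 - θ) (by linarith) (by linarith)
    have hsθ : Real.sin (Real.pi / 2 - θ) = Real.cos θ := Real.sin_pi_div_two_sub θ
    have hcθ : Real.cos (Real.pi / 2 - θ) = Real.sin θ := Real.cos_pi_div_two_sub θ
    rw [hsθ, hcθ] at key
    have hθeq : Real.pi / 2 - (Real.pi / 2 - θ) = θ := by ring
    rw [hθeq] at key
    nlinarith [key]

/-- The numerator-derivative identity packaged: z has derivative δ·Num/cos⁴ at θ. -/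
lemma z_hasDerivAt (δ : ℝ) {θ : ℝ} (hc : Real.cos θ ≠ 0) :
    HasDerivAt (fun θ => 1 + δ * xi θ)
      (δ * (((2 * Real.cos θ * (-Real.sin θ)
          + (((2 * Real.sin θ + 2 * θ * Real.cos θ) * Real.cos θ
              + (2 * θ * Real.sin θ) * (-Real.sin θ))) + 2 * θ) * Real.cos θ ^ 2
        - (Real.cos θ ^ 2 + 2 * θ * Real.sin θ * Real.cos θ + θ ^ 2 - Real.pi ^ 2 / 4)
            * (2 * Real.cos θ * (-Real.sin θ))) / (Real.cos θ ^ 2) ^ 2)) θ := by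
  have hG : HasDerivAt (fun x : ℝ => Real.cos x ^ 2) (2 * Real.cos θ * (-Real.sin θ)) θ := by
    simpa using (Real.hasDerivAt_cos θ).fun_pow 2
  have hF : HasDerivAt (fun x : ℝ => Real.cos x ^ 2 + 2 * x * Real.sin x * Real.cos x
        + x ^ 2 - Real.pi ^ 2 / 4)
      (2 * Real.cos θ * (-Real.sin θ)
        + (((2 * Real.sin θ + 2 * θ * Real.cos θ) * Real.cos θ
            + (2 * θ * Real.sin θ) * (-Real.sin θ))) + 2 * θ) θ := by
    have h1 : HasDerivAt (fun x : ℝ => 2 * x * Real.sin x * Real.cos x)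
        ((2 * Real.sin θ + 2 * θ * Real.cos θ) * Real.cos θ
          + (2 * θ * Real.sin θ) * (-Real.sin θ)) θ := by
      have := ((((hasDerivAt_id' θ).const_mul 2).fun_mul (Real.hasDerivAt_sin θ)).fun_mul
        (Real.hasDerivAt_cos θ))
      exact this.congr_deriv (by ring)
    have h2 : HasDerivAt (fun x : ℝ => x ^ 2) (2 * θ) θ := by
      simpa using hasDerivAt_pow 2 θ
    exact (((hG.add h1).add h2).sub_const (Real.pi ^ 2 / 4))
  have hxi : HasDerivAt xi
      (((2 * Real.cos θ * (-Real.sin θ)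
          + (((2 * Real.sin θ + 2 * θ * Real.cos θ) * Real.cos θ
              + (2 * θ * Real.sin θ) * (-Real.sin θ))) + 2 * θ) * Real.cos θ ^ 2
        - (Real.cos θ ^ 2 + 2 * θ * Real.sin θ * Real.cos θ + θ ^ 2 - Real.pi ^ 2 / 4)
            * (2 * Real.cos θ * (-Real.sin θ))) / (Real.cos θ ^ 2) ^ 2) θ :=
    hF.div hG (pow_ne_zero 2 hc)
  exact (hxi.const_mul δ).const_add 1

lemma zderiv_pos (δ : ℝ) (hδ : 0 < δ) {θ : ℝ} (h0 : 0 < θ) (h2 : θ < Real.pi / 2) :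
    0 < deriv (fun θ => 1 + δ * xi θ) θ := by
  have hc : 0 < Real.cos θ := Real.cos_pos_of_mem_Ioo ⟨by linarith [Real.pi_pos], h2⟩
  rw [(z_hasDerivAt δ hc.ne').deriv]
  have hh := hkey h0 h2
  have hnum : 0 < (2 * Real.cos θ * (-Real.sin θ)
          + (((2 * Real.sin θ + 2 * θ * Real.cos θ) * Real.cos θ
              + (2 * θ * Real.sin θ) * (-Real.sin θ))) + 2 * θ) * Real.cos θ ^ 2
        - (Real.cos θ ^ 2 + 2 * θ * Real.sin θ * Real.cos θ + θ ^ 2 - Real.pi ^ 2 / 4)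
            * (2 * Real.cos θ * (-Real.sin θ)) := by
    have hid : (2 * Real.cos θ * (-Real.sin θ)
          + (((2 * Real.sin θ + 2 * θ * Real.cos θ) * Real.cos θ
              + (2 * θ * Real.sin θ) * (-Real.sin θ))) + 2 * θ) * Real.cos θ ^ 2
        - (Real.cos θ ^ 2 + 2 * θ * Real.sin θ * Real.cos θ + θ ^ 2 - Real.pi ^ 2 / 4)
            * (2 * Real.cos θ * (-Real.sin θ))
        = 2 * Real.cos θ * (2 * θ * Real.cos θ
            + Real.sin θ * (Real.cos θ ^ 2 + θ ^ 2 - Real.pi ^ 2 / 4)) := by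
      linear_combination (2 * θ * Real.cos θ ^ 2) * (Real.sin_sq_add_cos_sq θ)
    rw [hid]
    positivity
  positivity

lemma zderiv_neg (δ : ℝ) (hδ : 0 < δ) {θ : ℝ} (h0 : -(Real.pi / 2) < θ) (h2 : θ < 0) :
    deriv (fun θ => 1 + δ * xi θ) θ < 0 := by
  have hc : 0 < Real.cos θ := Real.cos_pos_of_mem_Ioo ⟨h0, by linarith [Real.pi_pos]⟩
  rw [(z_hasDerivAt δ hc.ne').deriv]
  have hh := hkey (θ := -θ) (by linarith) (by linarith)
  rw [Real.sin_neg, Real.cos_neg] at hh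
  have hnum : (2 * Real.cos θ * (-Real.sin θ)
          + (((2 * Real.sin θ + 2 * θ * Real.cos θ) * Real.cos θ
              + (2 * θ * Real.sin θ) * (-Real.sin θ))) + 2 * θ) * Real.cos θ ^ 2
        - (Real.cos θ ^ 2 + 2 * θ * Real.sin θ * Real.cos θ + θ ^ 2 - Real.pi ^ 2 / 4)
            * (2 * Real.cos θ * (-Real.sin θ)) < 0 := by
    have hid : (2 * Real.cos θ * (-Real.sin θ)
          + (((2 * Real.sin θ + 2 * θ * Real.cos θ) * Real.cos θ
              + (2 * θ * Real.sin θ) * (-Real.sin θ))) + 2 * θ) * Real.cos θ ^ 2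
        - (Real.cos θ ^ 2 + 2 * θ * Real.sin θ * Real.cos θ + θ ^ 2 - Real.pi ^ 2 / 4)
            * (2 * Real.cos θ * (-Real.sin θ))
        = -(2 * Real.cos θ * (2 * (-θ) * Real.cos θ
            + (-Real.sin θ) * (Real.cos θ ^ 2 + (-θ) ^ 2 - Real.pi ^ 2 / 4))) := by
      linear_combination (2 * θ * Real.cos θ ^ 2) * (Real.sin_sq_add_cos_sq θ)
    rw [hid]
    have := mul_pos (by positivity : (0:ℝ) < 2 * Real.cos θ) hh
    linarith
  have hq : (0:ℝ) < (Real.cos θ ^ 2) ^ 2 := by positivity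
  exact mul_neg_of_pos_of_neg hδ (div_neg_of_neg_of_pos hnum hq)

theorem z_monotonicity_and_min (δ : ℝ) (hδ : 0 < δ) :
    StrictAntiOn (fun θ => 1 + δ * xi θ) (Set.Ioo (-(Real.pi / 2)) (0 : ℝ)) ∧
    StrictMonoOn (fun θ => 1 + δ * xi θ) (Set.Ioo (0 : ℝ) (Real.pi / 2)) ∧
    1 + δ * xi 0 = 1 + δ * (1 - Real.pi ^ 2 / 4) ∧
    (∀ θ ∈ Set.Ioo (-(Real.pi / 2)) (Real.pi / 2),
      θ ≠ 0 → 1 + δ * xi 0 < 1 + δ * xi θ) := by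
  have hcont : ∀ x ∈ Set.Ioo (-(Real.pi / 2)) (Real.pi / 2),
      ContinuousAt (fun θ => 1 + δ * xi θ) x := by
    intro x hx
    have hc : 0 < Real.cos x := Real.cos_pos_of_mem_Ioo hx
    exact (z_hasDerivAt δ hc.ne').continuousAt
  have hmono : StrictMonoOn (fun θ => 1 + δ * xi θ) (Set.Ico (0:ℝ) (Real.pi / 2)) := by
    apply strictMonoOn_of_deriv_pos (convex_Ico 0 (Real.pi / 2))
    · intro x hx
      exact (hcont x ⟨by linarith [Real.pi_pos, hx.1], hx.2⟩).continuousWithinAt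
    · intro x hx
      rw [interior_Ico] at hx
      exact zderiv_pos δ hδ hx.1 hx.2
  have hanti : StrictAntiOn (fun θ => 1 + δ * xi θ) (Set.Ioc (-(Real.pi / 2)) (0:ℝ)) := by
    apply strictAntiOn_of_deriv_neg (convex_Ioc (-(Real.pi / 2)) 0)
    · intro x hx
      exact (hcont x ⟨hx.1, by linarith [Real.pi_pos, hx.2]⟩).continuousWithinAt
    · intro x hx
      rw [interior_Ioc] at hx
      exact zderiv_neg δ hδ hx.1 hx.2
  have hpi := Real.pi_pos
  refine ⟨hanti.mono Set.Ioo_subset_Ioc_self, hmono.mono Set.Ioo_subset_Ico_self, ?_, ?_⟩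
  · have : xi 0 = 1 - Real.pi ^ 2 / 4 := by
      simp [xi]
    rw [this]
  · intro θ hθ hne
    rcases lt_or_gt_of_ne hne with h | h
    · exact hanti ⟨hθ.1, h.le⟩ ⟨by linarith, le_refl 0⟩ h
    · exact hmono ⟨le_refl 0, by linarith⟩ ⟨h.le, hθ.2⟩ h
end

section
/- Let δ be a real number with 0 ≤ δ ≤ 1/2 and define z(θ) = 1 + δ·ξ(θ). Then for every θ in (−π/2, π/2), z(θ) ≤ 1, and z(θ) tends to 1 as θ tends to π/2 from the left. -/
open Real Set Filter Topology

noncomputable def Nf (θ : ℝ) : ℝ :=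
  Real.cos θ ^ 2 + 2 * θ * Real.sin θ * Real.cos θ + θ ^ 2 - Real.pi ^ 2 / 4

lemma Nf_deriv (θ : ℝ) : HasDerivAt Nf (4 * θ * Real.cos θ ^ 2) θ := by
  unfold Nf
  have h1 : HasDerivAt (fun x : ℝ => Real.cos x ^ 2) (2 * Real.cos θ * (-Real.sin θ)) θ :=
    (Real.hasDerivAt_cos θ).pow 2 |>.congr_deriv (by ring)
  have hx2 : HasDerivAt (fun x : ℝ => 2 * x) 2 θ := by
    simpa using (hasDerivAt_id θ).const_mul (2 : ℝ)
  have h2 := (hx2.mul (Real.hasDerivAt_sin θ)).mul (Real.hasDerivAt_cos θ)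
  have h3 : HasDerivAt (fun x : ℝ => x ^ 2) (2 * θ) θ := by
    simpa using hasDerivAt_pow 2 θ
  have := ((h1.add h2).add h3).sub_const (Real.pi ^ 2 / 4)
  refine this.congr_deriv ?_
  simp only [Pi.mul_apply]
  linear_combination (-(2 * θ)) * Real.sin_sq_add_cos_sq θ

lemma Nf_pi_div_two : Nf (Real.pi / 2) = 0 := by
  simp [Nf, Real.cos_pi_div_two]
  ring

lemma Nf_nonpos {θ : ℝ} (h0 : 0 ≤ θ) (h1 : θ ≤ Real.pi / 2) : Nf θ ≤ 0 := by
  have hmono : MonotoneOn Nf (Set.Icc 0 (Real.pi / 2)) := by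
    apply monotoneOn_of_deriv_nonneg (convex_Icc _ _)
    · exact Continuous.continuousOn (by
        have : Continuous Nf := by
          unfold Nf; continuity
        exact this)
    · intro x hx
      exact (Nf_deriv x).differentiableAt.differentiableWithinAt
    · intro x hx
      rw [(Nf_deriv x).deriv]
      have hx0 : 0 ≤ x := (interior_subset hx).1
      positivity
  have := hmono ⟨h0, h1⟩ (Set.right_mem_Icc.2 (by linarith [Real.pi_pos])) h1
  rw [Nf_pi_div_two] at this
  exact this

lemma Nf_even (θ : ℝ) : Nf (-θ) = Nf θ := by
  unfold Nf
  rw [Real.cos_neg, Real.sin_neg]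
  ring

lemma Nf_nonpos' {θ : ℝ} (h : θ ∈ Set.Ioo (-(Real.pi / 2)) (Real.pi / 2)) : Nf θ ≤ 0 := by
  rcases le_or_gt 0 θ with h0 | h0
  · exact Nf_nonpos h0 h.2.le
  · rw [← Nf_even]
    exact Nf_nonpos (by linarith [h.1]) (by linarith [h.1])

theorem z_le_one_and_limit (δ : ℝ) (hδ0 : 0 ≤ δ) (hδ1 : δ ≤ 1 / 2) :
    (∀ θ ∈ Set.Ioo (-(Real.pi / 2)) (Real.pi / 2), 1 + δ * xi θ ≤ 1) ∧
    Filter.Tendsto (fun θ => 1 + δ * xi θ)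
      (nhdsWithin (Real.pi / 2) (Set.Iio (Real.pi / 2))) (nhds 1) := by
  constructor
  · intro θ hθ
    have hcos : 0 < Real.cos θ := Real.cos_pos_of_mem_Ioo hθ
    have hxi : xi θ ≤ 0 := by
      unfold xi
      exact div_nonpos_of_nonpos_of_nonneg (Nf_nonpos' hθ) (by positivity)
    nlinarith
  · -- limit
    have hIoo : Set.Ioo 0 (Real.pi / 2) ∈ 𝓝[<] (Real.pi / 2) := by
      apply Ioo_mem_nhdsLT_of_mem
      exact ⟨by linarith [Real.pi_pos], le_refl _⟩
    have hcossq : ∀ x : ℝ, HasDerivAt (fun y : ℝ => Real.cos y ^ 2)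
        (2 * Real.cos x * (-Real.sin x)) x := fun x =>
      (Real.hasDerivAt_cos x).pow 2 |>.congr_deriv (by ring)
    have hlim : Tendsto (fun θ => Nf θ / Real.cos θ ^ 2) (𝓝[<] (Real.pi / 2)) (𝓝 0) := by
      apply HasDerivAt.lhopital_zero_nhdsLT
        (f' := fun x => 4 * x * Real.cos x ^ 2)
        (g' := fun x => 2 * Real.cos x * (-Real.sin x))
      · exact Filter.Eventually.of_forall Nf_deriv
      · exact Filter.Eventually.of_forall hcossq
      · filter_upwards [hIoo] with x hx
        have hc : 0 < Real.cos x := Real.cos_pos_of_mem_Ioo ⟨by linarith [hx.1, Real.pi_pos], hx.2⟩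
        have hs : 0 < Real.sin x := Real.sin_pos_of_pos_of_lt_pi hx.1 (by linarith [hx.2, Real.pi_pos])
        nlinarith
      · have hc : Continuous Nf := by unfold Nf; continuity
        have := hc.continuousAt (x := Real.pi / 2)
        rw [ContinuousAt, Nf_pi_div_two] at this
        exact this.mono_left nhdsWithin_le_nhds
      · have hc : Continuous (fun y : ℝ => Real.cos y ^ 2) := by continuity
        have := hc.continuousAt (x := Real.pi / 2)
        rw [ContinuousAt] at this
        simp only [Real.cos_pi_div_two] at this
        norm_num at this
        exact this.mono_left nhdsWithin_le_nhds
      · have key : Tendsto (fun x : ℝ => -(2 * x * Real.cos x) / Real.sin x)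
            (𝓝[<] (Real.pi / 2)) (𝓝 0) := by
          have hc : ContinuousAt (fun x : ℝ => -(2 * x * Real.cos x) / Real.sin x) (Real.pi / 2) := by
            apply ContinuousAt.div
            · fun_prop
            · fun_prop
            · rw [Real.sin_pi_div_two]; norm_num
          have hv : -(2 * (Real.pi / 2) * Real.cos (Real.pi / 2)) / Real.sin (Real.pi / 2) = 0 := by
            simp [Real.cos_pi_div_two]
          have := hc.tendsto
          rw [hv] at this
          exact this.mono_left nhdsWithin_le_nhds
        apply key.congr'
        filter_upwards [hIoo] with x hx
        have hc : 0 < Real.cos x := Real.cos_pos_of_mem_Ioo ⟨by linarith [hx.1, Real.pi_pos], hx.2⟩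
        have hs : 0 < Real.sin x := Real.sin_pos_of_pos_of_lt_pi hx.1 (by linarith [hx.2, Real.pi_pos])
        have hden : 2 * Real.cos x * (-Real.sin x) ≠ 0 := by nlinarith
        rw [div_eq_div_iff hs.ne' hden]
        ring
    have hxi : Tendsto xi (𝓝[<] (Real.pi / 2)) (𝓝 0) := hlim
    have := (tendsto_const_nhds (x := (1:ℝ))).add (hxi.const_mul δ)
    simpa using this
end
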